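/- arXiv:1605.09431 — 2 statements merged into one kernel-verified Lean document; each statement's English description precedes it below -/
import Mathlib

section
/- Let d ≥ 3 and let Λ be a full-rank lattice in ℝ^d. Suppose the dual lattice Λ* contains a nonzero point u = (u_1,…,u_{d-1},0) with last coordinate zero. Then ω(Λ) ≥ 1/(d(d-2)): there are infinitely many nonzero v ∈ Λ and a constant c > 0 such that Π(v) ≤ c |v|^{-1/(d(d-2))}. -/
open scoped BigOperators

/-- `Π(x) = (∏ i |x_i|)^{1/d}` : the geometric-mean-type product function. -/
noncomputable def piProd (d : ℕ) (x : Fin d → ℝ) : ℝ :=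
  (∏ i, |x i|) ^ ((1 : ℝ) / d)

/-- A full-rank lattice in `ℝ^d`: the set of ℤ-linear combinations of an ℝ-basis. -/
def IsFullLattice {d : ℕ} (L : Set (Fin d → ℝ)) : Prop :=
  ∃ B : Module.Basis (Fin d) ℝ (Fin d → ℝ),
    L = {x | ∃ z : Fin d → ℤ, x = ∑ i, (z i : ℝ) • B i}

/-- The Diophantine exponent `ω(Λ)`, as an extended real number: the supremum of
all `γ : ℝ` such that `Π(x) ≤ |x|^{-γ}` has infinitely many solutions `x ∈ Λ \ {0}`
(the norm on `Fin d → ℝ` is the sup-norm). -/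
noncomputable def omegaExp {d : ℕ} (L : Set (Fin d → ℝ)) : EReal :=
  sSup {e : EReal | ∃ γ : ℝ, e = (γ : EReal) ∧
    {x | x ∈ L ∧ x ≠ 0 ∧ piProd d x ≤ ‖x‖ ^ (-γ)}.Infinite}

/-- The dual lattice `Λ* = {y | ⟨y,x⟩ ∈ ℤ for all x ∈ Λ}`. -/
def dualLattice {d : ℕ} (L : Set (Fin d → ℝ)) : Set (Fin d → ℝ) :=
  {y | ∀ x ∈ L, ∃ n : ℤ, (∑ i, y i * x i) = (n : ℝ)}

set_option maxHeartbeats 1600000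

section Aux

variable {d : ℕ} (B : Module.Basis (Fin d) ℝ (Fin d → ℝ))

noncomputable def phiB (z : Fin d → ℤ) : Fin d → ℝ := ∑ i, (z i : ℝ) • B i

lemma phiB_apply (z : Fin d → ℤ) (j : Fin d) : phiB B z j = ∑ i, (z i : ℝ) * B i j := by
  simp [phiB, Finset.sum_apply]

lemma phiB_sub (z w : Fin d → ℤ) : phiB B (z - w) = phiB B z - phiB B w := by
  simp [phiB, sub_smul, Finset.sum_sub_distrib]

lemma phiB_coord_bound (z : Fin d → ℤ) (T : ℝ) (hT : 0 ≤ T) (hz : ∀ i, |(z i : ℝ)| ≤ T)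
    (j : Fin d) : |phiB B z j| ≤ (1 + ∑ i, ‖B i‖) * T := by
  rw [phiB_apply]
  calc |∑ i, (z i : ℝ) * B i j| ≤ ∑ i, |(z i : ℝ) * B i j| := Finset.abs_sum_le_sum_abs _ _
    _ ≤ ∑ i, ‖B i‖ * T := by
        refine Finset.sum_le_sum fun i _ => ?_
        rw [abs_mul]
        have h1 : |B i j| ≤ ‖B i‖ := by
          simpa [Real.norm_eq_abs] using norm_le_pi_norm (B i) j
        calc |(z i : ℝ)| * |B i j| ≤ T * ‖B i‖ :=
              mul_le_mul (hz i) h1 (abs_nonneg _) hT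
          _ = ‖B i‖ * T := mul_comm _ _
    _ = (∑ i, ‖B i‖) * T := (Finset.sum_mul _ _ _).symm
    _ ≤ (1 + ∑ i, ‖B i‖) * T := by
        apply mul_le_mul_of_nonneg_right _ hT
        linarith

lemma inner_phiB (u : Fin d → ℝ) (m : Fin d → ℤ)
    (hm : ∀ i, ∑ j, u j * B i j = (m i : ℝ)) (z : Fin d → ℤ) :
    ∑ j, u j * phiB B z j = ((∑ i, z i * m i : ℤ) : ℝ) := by
  have h : ∑ j, u j * phiB B z j = ∑ i, (z i : ℝ) * ∑ j, u j * B i j := by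
    simp only [phiB_apply, Finset.mul_sum]
    rw [Finset.sum_comm]
    congr 1; ext i
    congr 1; ext j
    ring
  rw [h]
  push_cast
  congr 1; ext i
  rw [hm i]

lemma filter_card_aux (k lst : Fin d) (hkl : k ≠ lst) :
    (Finset.univ.filter (fun i : Fin d => ¬(i = k ∨ i = lst))).card = d - 2 := by
  have h : (Finset.univ.filter (fun i : Fin d => ¬(i = k ∨ i = lst)))
      = ({k, lst} : Finset (Fin d))ᶜ := by
    ext i; simp [not_or]
  rw [h, Finset.card_compl]
  have h2 : ({k, lst} : Finset (Fin d)).card = 2 := by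
    rw [Finset.card_insert_of_notMem (by simp [hkl]), Finset.card_singleton]
  rw [h2]
  simp

/-- Key pigeonhole construction. -/
lemma key_pigeonhole (hd : 3 ≤ d) (u : Fin d → ℝ) (k lst : Fin d) (hkl : k ≠ lst)
    (huk : u k ≠ 0) (hulast : u lst = 0)
    (m : Fin d → ℤ) (hm : ∀ i, ∑ j, u j * B i j = (m i : ℝ))
    (T : ℕ) (hT : 45 * (1 + ∑ i, |m i|) ≤ (T : ℤ)) :
    ∃ z : Fin d → ℤ, z ≠ 0 ∧
      (∀ i, i ≠ lst → |phiB B z i| ≤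
        ((1 + (∑ j, |u j|) / |u k|) * (9 * ((1 : ℝ) + ∑ i, (|m i| : ℝ))) *
          (1 + ∑ i, ‖B i‖)) * (T : ℝ) ^ (-(1 : ℝ) / ((d : ℝ) - 2))) ∧
      (∀ i, |phiB B z i| ≤ 2 * (1 + ∑ i, ‖B i‖) * T) := by
  classical
  set Mu : ℤ := 1 + ∑ i, |m i| with hMu_def
  have hMu1 : 1 ≤ Mu := by
    have : (0 : ℤ) ≤ ∑ i, |m i| := Finset.sum_nonneg fun i _ => abs_nonneg _
    omega
  have hMuR : (1 : ℝ) ≤ (Mu : ℝ) := by exact_mod_cast hMu1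
  have hT45 : 45 ≤ (T : ℤ) := le_trans (by nlinarith) hT
  have hT1 : 1 ≤ (T : ℝ) := by
    have h : (1 : ℤ) ≤ (T : ℤ) := by omega
    exact_mod_cast h
  have hT0 : (0 : ℝ) < T := lt_of_lt_of_le one_pos hT1
  set C1 : ℝ := 1 + ∑ i, ‖B i‖ with hC1_def
  have hC1 : 1 ≤ C1 := by
    have h : (0 : ℝ) ≤ ∑ i, ‖B i‖ := Finset.sum_nonneg fun i _ => norm_nonneg _
    linarith
  have hC10 : 0 < C1 := lt_of_lt_of_le one_pos hC1
  have hd2R : (2 : ℝ) < (d : ℝ) := by exact_mod_cast (by omega : 2 < d)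
  have hd2pos : (0 : ℝ) < (d : ℝ) - 2 := by linarith
  set q : ℝ := ((d : ℝ) - 1) / ((d : ℝ) - 2) with hq_def
  have hq1 : 1 ≤ q := by
    rw [hq_def, le_div_iff₀ hd2pos]; linarith
  set R : ℝ := (T : ℝ) ^ q / (9 * (Mu : ℝ)) with hR_def
  have hMu9 : (0 : ℝ) < 9 * (Mu : ℝ) := by linarith
  have hTq : (T : ℝ) ≤ (T : ℝ) ^ q := by
    have h := Real.rpow_le_rpow_of_exponent_le hT1 hq1
    rwa [Real.rpow_one] at h
  have hTqpos : (0 : ℝ) < (T : ℝ) ^ q := Real.rpow_pos_of_pos hT0 q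
  have hR5 : 5 ≤ R := by
    rw [hR_def, le_div_iff₀ hMu9]
    have hTM : 45 * (Mu : ℝ) ≤ (T : ℝ) := by exact_mod_cast hT
    linarith
  have hR0 : 0 < R := by linarith
  set Ns : ℤ := ⌈R⌉ + 1 with hNs_def
  have hNsR : R ≤ (Ns : ℝ) := by
    push_cast [hNs_def]
    have h := Int.le_ceil R
    linarith
  have hNs_le : (Ns : ℝ) ≤ R + 2 := by
    push_cast [hNs_def]
    have h := Int.ceil_lt_add_one R
    linarith
  have hNs1 : (1 : ℝ) ≤ (Ns : ℝ) := by linarith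
  have hNs0 : (0 : ℝ) < (Ns : ℝ) := by linarith
  set s : ℝ := C1 * T / Ns with hs_def
  have hs0 : 0 < s := div_pos (by positivity) hNs0
  have hCTs : C1 * (T : ℝ) / s = (Ns : ℝ) := by
    rw [hs_def]
    field_simp
  -- domain and bucket map
  set D : Finset (Fin d → ℤ) :=
    Fintype.piFinset (fun _ : Fin d => Finset.Icc (0 : ℤ) T) with hD_def
  have hcardD : D.card = (T + 1) ^ d := by
    rw [hD_def, Fintype.card_piFinset]
    simp [Int.card_Icc]
  set G : (Fin d → ℤ) → ℤ × (Fin d → ℤ) := fun z =>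
    (∑ i, z i * m i, fun i => if i = k ∨ i = lst then 0 else ⌊phiB B z i / s⌋) with hG_def
  set t : Finset (ℤ × (Fin d → ℤ)) :=
    Finset.Icc (-((T : ℤ) * Mu)) ((T : ℤ) * Mu) ×ˢ
      Fintype.piFinset (fun i => if i = k ∨ i = lst then {0} else Finset.Icc (-Ns) Ns)
    with ht_def
  have hzcoord : ∀ z : Fin d → ℤ, z ∈ D → ∀ j, |(z j : ℝ)| ≤ (T : ℝ) := by
    intro z hz j
    simp only [hD_def, Fintype.mem_piFinset, Finset.mem_Icc] at hz
    rw [abs_le]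
    constructor
    · exact_mod_cast le_trans (by omega : -(T : ℤ) ≤ 0) (hz j).1
    · exact_mod_cast (hz j).2
  have hmaps : ∀ z ∈ D, G z ∈ t := by
    intro z hz
    have hzc := hzcoord z hz
    simp only [hD_def, Fintype.mem_piFinset, Finset.mem_Icc] at hz
    rw [ht_def, Finset.mem_product]
    constructor
    · simp only [hG_def, Finset.mem_Icc]
      have habs : |∑ i, z i * m i| ≤ (T : ℤ) * Mu := by
        calc |∑ i, z i * m i| ≤ ∑ i, |z i * m i| := Finset.abs_sum_le_sum_abs _ _
          _ ≤ ∑ i, (T : ℤ) * |m i| := by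
              refine Finset.sum_le_sum fun i _ => ?_
              rw [abs_mul]
              refine mul_le_mul ?_ le_rfl (abs_nonneg _) (by positivity)
              rw [abs_le]; exact ⟨by linarith [(hz i).1], (hz i).2⟩
          _ = (T : ℤ) * ∑ i, |m i| := by rw [Finset.mul_sum]
          _ ≤ (T : ℤ) * Mu := by
              have h0 : (0 : ℤ) ≤ (T : ℤ) := by omega
              have h1 : (∑ i, |m i|) ≤ Mu := by omega
              exact mul_le_mul_of_nonneg_left h1 h0
      exact abs_le.mp habs
    · rw [Fintype.mem_piFinset]
      intro i
      simp only [hG_def]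
      by_cases hik : i = k ∨ i = lst
      · simp [hik]
      · simp only [hik, if_false]
        have hcoord : |phiB B z i| ≤ C1 * T :=
          phiB_coord_bound B z T (le_of_lt hT0) hzc i
        have habs := abs_le.mp hcoord
        have hup : phiB B z i / s ≤ (Ns : ℝ) := by
          rw [← hCTs]
          gcongr
          exact habs.2
        have hlo : (-Ns : ℝ) ≤ phiB B z i / s := by
          have h : -(C1 * (T : ℝ)) / s ≤ phiB B z i / s := by
            gcongr
            exact habs.1
          rw [neg_div, hCTs] at h
          exact_mod_cast h
        simp only [if_neg hik, Finset.mem_Icc]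
        constructor
        · exact Int.le_floor.mpr (by exact_mod_cast hlo)
        · have h : (⌊phiB B z i / s⌋ : ℝ) ≤ (Ns : ℝ) :=
            le_trans (Int.floor_le _) hup
          exact_mod_cast h
  -- cardinality computations
  have hcardt : t.card = (2 * ((T : ℤ) * Mu) + 1).toNat * ((2 * Ns + 1).toNat) ^ (d - 2) := by
    rw [ht_def, Finset.card_product, Fintype.card_piFinset]
    congr 1
    · rw [Int.card_Icc]; congr 1; ring
    · have h : ∀ i : Fin d, ((if i = k ∨ i = lst then ({0} : Finset ℤ)
          else Finset.Icc (-Ns) Ns)).card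
          = if i = k ∨ i = lst then 1 else (2 * Ns + 1).toNat := by
        intro i; by_cases h : i = k ∨ i = lst
        · simp [h]
        · simp only [h, if_false]; rw [Int.card_Icc]; congr 1; ring
      rw [Finset.prod_congr rfl (fun i _ => h i), Finset.prod_ite, Finset.prod_const_one,
        Finset.prod_const, one_mul, filter_card_aux k lst hkl]
  have hlt : t.card < D.card := by
    rw [hcardt, hcardD]
    have hTMnn : (0 : ℤ) ≤ 2 * ((T : ℤ) * Mu) + 1 := by nlinarith
    have hNsnn : (0 : ℤ) ≤ 2 * Ns + 1 := by
      have : (0 : ℝ) < 2 * (Ns : ℝ) + 1 := by linarith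
      exact_mod_cast le_of_lt (by exact_mod_cast this : (0 : ℤ) < 2 * Ns + 1)
    -- cast to ℝ
    rw [← Nat.cast_lt (α := ℝ)]
    have e1 : (((2 * ((T : ℤ) * Mu) + 1).toNat : ℕ) : ℝ) = 2 * ((T : ℝ) * (Mu : ℝ)) + 1 := by
      rw [← @Int.cast_natCast ℝ _ _, Int.toNat_of_nonneg hTMnn]; push_cast; ring
    have e2 : (((2 * Ns + 1).toNat : ℕ) : ℝ) = 2 * (Ns : ℝ) + 1 := by
      rw [← @Int.cast_natCast ℝ _ _, Int.toNat_of_nonneg hNsnn]; push_cast; ring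
    push_cast
    rw [e1, e2]
    have key : (2 * ((T : ℝ) * Mu) + 1) * (2 * (Ns : ℝ) + 1) ^ (d - 2) ≤ (T : ℝ) ^ d := by
      have h1 : 2 * ((T : ℝ) * Mu) + 1 ≤ 3 * ((T : ℝ) * Mu) := by nlinarith
      have h2 : (2 * (Ns : ℝ) + 1) ≤ 3 * R := by linarith
      have h3 : (2 * (Ns : ℝ) + 1) ^ (d - 2) ≤ (3 * R) ^ (d - 2) :=
        pow_le_pow_left₀ (by linarith) h2 _
      have h3R : 3 * R = (T : ℝ) ^ q / (3 * (Mu : ℝ)) := by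
        rw [hR_def]; field_simp; ring
      have hpowq : ((T : ℝ) ^ q) ^ (d - 2 : ℕ) = (T : ℝ) ^ (d - 1 : ℕ) := by
        rw [← Real.rpow_natCast ((T : ℝ) ^ q) (d - 2), ← Real.rpow_mul hT0.le]
        rw [← Real.rpow_natCast (T : ℝ) (d - 1)]
        congr 1
        have hc2 : ((d - 2 : ℕ) : ℝ) = (d : ℝ) - 2 := by
          have : (2 : ℕ) ≤ d := by omega
          push_cast [Nat.cast_sub this]
          ring
        have hc1 : ((d - 1 : ℕ) : ℝ) = (d : ℝ) - 1 := by
          have : (1 : ℕ) ≤ d := by omega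
          push_cast [Nat.cast_sub this]
          ring
        rw [hc2, hc1, hq_def]
        field_simp
      have h4 : (3 * R) ^ (d - 2) ≤ (T : ℝ) ^ (d - 1 : ℕ) / (3 * (Mu : ℝ)) := by
        rw [h3R, div_pow, hpowq]
        have hbase : (1 : ℝ) ≤ 3 * (Mu : ℝ) := by linarith
        have hself : 3 * (Mu : ℝ) ≤ (3 * (Mu : ℝ)) ^ (d - 2) :=
          le_self_pow₀ hbase (by omega)
        gcongr
      calc (2 * ((T : ℝ) * Mu) + 1) * (2 * (Ns : ℝ) + 1) ^ (d - 2)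
          ≤ 3 * ((T : ℝ) * Mu) * ((T : ℝ) ^ (d - 1 : ℕ) / (3 * (Mu : ℝ))) := by
            apply mul_le_mul h1 (le_trans h3 h4) (by positivity) (by positivity)
        _ = (T : ℝ) * (T : ℝ) ^ (d - 1 : ℕ) := by
            field_simp
        _ = (T : ℝ) ^ d := by
            rw [← pow_succ' (T : ℝ) (d - 1)]
            congr 1
            omega
    have hfin : (T : ℝ) ^ d < ((T : ℝ) + 1) ^ d :=
      pow_lt_pow_left₀ (by linarith) hT0.le (by omega)
    calc (2 * ((T : ℝ) * Mu) + 1) * (2 * (Ns : ℝ) + 1) ^ (d - 2)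
        ≤ (T : ℝ) ^ d := key
      _ < ((T : ℝ) + 1) ^ d := hfin
  -- pigeonhole
  obtain ⟨x, hx, y, hy, hxy, hGxy⟩ := Finset.exists_ne_map_eq_of_card_lt_of_maps_to hlt hmaps
  set z : Fin d → ℤ := x - y with hz_def
  have h1st : ∑ i, x i * m i = ∑ i, y i * m i := congrArg Prod.fst hGxy
  have h2nd : ∀ i, (if i = k ∨ i = lst then 0 else ⌊phiB B x i / s⌋)
      = (if i = k ∨ i = lst then 0 else ⌊phiB B y i / s⌋) :=
    fun i => congrFun (congrArg Prod.snd hGxy) i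
  have hvsub : ∀ i, phiB B z i = phiB B x i - phiB B y i := by
    intro i; rw [hz_def, phiB_sub]; simp
  have hsum0 : ∑ j, u j * phiB B z j = 0 := by
    rw [inner_phiB B u m hm z]
    have h : ∑ i, z i * m i = 0 := by
      simp only [hz_def, Pi.sub_apply, sub_mul, Finset.sum_sub_distrib, h1st, sub_self]
    rw [h]
    norm_num
  have htrans : ∀ i, ¬(i = k ∨ i = lst) → |phiB B z i| < s := by
    intro i hik
    have hfl : ⌊phiB B x i / s⌋ = ⌊phiB B y i / s⌋ := by
      have h := h2nd i; simpa [hik] using h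
    have h := Int.abs_sub_lt_one_of_floor_eq_floor (R := ℝ) hfl
    rw [div_sub_div_same, abs_div, abs_of_pos hs0, div_lt_one hs0] at h
    rw [hvsub]; exact h
  have hsle : s ≤ 9 * (Mu : ℝ) * C1 * (T : ℝ) ^ (-(1 : ℝ) / ((d : ℝ) - 2)) := by
    have h1 : s ≤ C1 * T / R := by
      rw [hs_def]; gcongr
    have h2 : C1 * T / R = 9 * (Mu : ℝ) * C1 * ((T : ℝ) * ((T : ℝ) ^ q)⁻¹) := by
      rw [hR_def]; field_simp
    have h3 : (T : ℝ) * ((T : ℝ) ^ q)⁻¹ = (T : ℝ) ^ ((1 : ℝ) - q) := by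
      rw [Real.rpow_sub hT0, Real.rpow_one, div_eq_mul_inv]
    have h4 : (1 : ℝ) - q = -(1 : ℝ) / ((d : ℝ) - 2) := by
      rw [hq_def]; field_simp; ring
    calc s ≤ C1 * T / R := h1
      _ = 9 * (Mu : ℝ) * C1 * ((T : ℝ) * ((T : ℝ) ^ q)⁻¹) := h2
      _ = 9 * (Mu : ℝ) * C1 * (T : ℝ) ^ (-(1 : ℝ) / ((d : ℝ) - 2)) := by rw [h3, h4]
  have hMucast : (Mu : ℝ) = 1 + ∑ i, (|m i| : ℝ) := by
    rw [hMu_def]; push_cast; ring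
  have hS0 : (0 : ℝ) ≤ (∑ j, |u j|) / |u k| :=
    div_nonneg (Finset.sum_nonneg fun j _ => abs_nonneg _) (abs_nonneg _)
  have hTe0 : (0 : ℝ) < (T : ℝ) ^ (-(1 : ℝ) / ((d : ℝ) - 2)) := Real.rpow_pos_of_pos hT0 _
  refine ⟨z, by rw [hz_def]; exact sub_ne_zero.mpr hxy, ?_, ?_⟩
  · intro i hil
    have htarget_eq : ((1 + (∑ j, |u j|) / |u k|) * (9 * ((1 : ℝ) + ∑ i, (|m i| : ℝ))) *
          (1 + ∑ i, ‖B i‖)) * (T : ℝ) ^ (-(1 : ℝ) / ((d : ℝ) - 2))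
        = (1 + (∑ j, |u j|) / |u k|) *
            (9 * (Mu : ℝ) * C1 * (T : ℝ) ^ (-(1 : ℝ) / ((d : ℝ) - 2))) := by
      rw [hMucast, hC1_def]; ring
    rw [htarget_eq]
    by_cases hik : i = k
    · rw [hik]
      have hsplit : u k * phiB B z k = -∑ j ∈ Finset.univ.erase k, u j * phiB B z j := by
        have h := hsum0
        rw [← Finset.add_sum_erase _ (fun j => u j * phiB B z j) (Finset.mem_univ k)] at h
        linarith
      have hker : |u k| * |phiB B z k| ≤ (∑ j, |u j|) * s := by
        calc |u k| * |phiB B z k| = |u k * phiB B z k| := (abs_mul _ _).symm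
          _ = |∑ j ∈ Finset.univ.erase k, u j * phiB B z j| := by rw [hsplit, abs_neg]
          _ ≤ ∑ j ∈ Finset.univ.erase k, |u j * phiB B z j| :=
              Finset.abs_sum_le_sum_abs _ _
          _ ≤ ∑ j ∈ Finset.univ.erase k, |u j| * s := by
              refine Finset.sum_le_sum fun j hj => ?_
              rw [abs_mul]
              by_cases hjl : j = lst
              · subst hjl; rw [hulast]; simp
              · refine mul_le_mul_of_nonneg_left ?_ (abs_nonneg _)
                exact le_of_lt (htrans j (by
                  push_neg
                  exact ⟨Finset.ne_of_mem_erase hj, hjl⟩))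
          _ = (∑ j ∈ Finset.univ.erase k, |u j|) * s := (Finset.sum_mul _ _ _).symm
          _ ≤ (∑ j, |u j|) * s := by
              refine mul_le_mul_of_nonneg_right ?_ hs0.le
              exact Finset.sum_le_sum_of_subset_of_nonneg (Finset.erase_subset _ _)
                (fun _ _ _ => abs_nonneg _)
      have habs : |phiB B z k| ≤ (∑ j, |u j|) / |u k| * s := by
        have hukpos : 0 < |u k| := abs_pos.mpr huk
        rw [div_mul_eq_mul_div, le_div_iff₀ hukpos]
        calc |phiB B z k| * |u k| = |u k| * |phiB B z k| := by rw [mul_comm]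
          _ ≤ (∑ j, |u j|) * s := hker
      calc |phiB B z k| ≤ (∑ j, |u j|) / |u k| * s := habs
        _ ≤ (1 + (∑ j, |u j|) / |u k|) * s := by nlinarith [hs0.le]
        _ ≤ (1 + (∑ j, |u j|) / |u k|) *
              (9 * (Mu : ℝ) * C1 * (T : ℝ) ^ (-(1 : ℝ) / ((d : ℝ) - 2))) := by
            exact mul_le_mul_of_nonneg_left hsle (by linarith)
    · have h := htrans i (by push_neg; exact ⟨hik, hil⟩)
      calc |phiB B z i| ≤ s := le_of_lt h
        _ ≤ 9 * (Mu : ℝ) * C1 * (T : ℝ) ^ (-(1 : ℝ) / ((d : ℝ) - 2)) := hsle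
        _ ≤ (1 + (∑ j, |u j|) / |u k|) *
              (9 * (Mu : ℝ) * C1 * (T : ℝ) ^ (-(1 : ℝ) / ((d : ℝ) - 2))) := by
            refine le_mul_of_one_le_left (by positivity) (by linarith)
  · intro i
    have hx1 : |phiB B x i| ≤ C1 * T := phiB_coord_bound B x T hT0.le (hzcoord x hx) i
    have hy1 : |phiB B y i| ≤ C1 * T := phiB_coord_bound B y T hT0.le (hzcoord y hy) i
    calc |phiB B z i| = |phiB B x i - phiB B y i| := by rw [hvsub]
      _ ≤ |phiB B x i| + |phiB B y i| := abs_sub _ _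
      _ ≤ 2 * C1 * T := by linarith



/-- Conversion of coordinate bounds into the `piProd` bound. -/
lemma conv_bound (hd : 3 ≤ d) (lst : Fin d) (v : Fin d → ℝ) (hv0 : v ≠ 0)
    (T : ℕ) (hT1 : 1 ≤ (T : ℝ)) (C6 C1' : ℝ) (hC6 : 1 ≤ C6) (hC1' : 1 ≤ C1')
    (h1 : ∀ i, i ≠ lst → |v i| ≤ C6 * (T : ℝ) ^ (-(1 : ℝ) / ((d : ℝ) - 2)))
    (h2 : ∀ i, |v i| ≤ C1' * T) :
    piProd d v ≤ (C6 ^ (d - 1) * C1' * (C6 + C1') ^ ((1 : ℝ) / ((d : ℝ) - 2)))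
        ^ ((1 : ℝ) / d) * ‖v‖ ^ (-(1 / ((d : ℝ) * ((d : ℝ) - 2)))) := by
  have hd2R : (2 : ℝ) < (d : ℝ) := by exact_mod_cast (by omega : 2 < d)
  have hd2pos : (0 : ℝ) < (d : ℝ) - 2 := by linarith
  have hd0 : (0 : ℝ) < (d : ℝ) := by linarith
  have hT0 : (0 : ℝ) < (T : ℝ) := by linarith
  have hvpos : 0 < ‖v‖ := norm_pos_iff.mpr hv0
  have hC60 : (0 : ℝ) < C6 := by linarith
  have hC1'0 : (0 : ℝ) < C1' := by linarith
  have hCsum : (0 : ℝ) < C6 + C1' := by linarith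
  have hTe0 : (0 : ℝ) < (T : ℝ) ^ (-(1 : ℝ) / ((d : ℝ) - 2)) := Real.rpow_pos_of_pos hT0 _
  have hTe1 : (T : ℝ) ^ (-(1 : ℝ) / ((d : ℝ) - 2)) ≤ 1 := by
    apply Real.rpow_le_one_of_one_le_of_nonpos hT1
    rw [neg_div]
    exact neg_nonpos.mpr (by positivity)
  -- norm bound
  have hnorm_le : ‖v‖ ≤ (C6 + C1') * T := by
    rw [pi_norm_le_iff_of_nonneg (by positivity)]
    intro i
    rw [Real.norm_eq_abs]
    by_cases hil : i = lst
    · calc |v i| ≤ C1' * T := h2 i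
        _ ≤ (C6 + C1') * T := by nlinarith
    · calc |v i| ≤ C6 * (T : ℝ) ^ (-(1 : ℝ) / ((d : ℝ) - 2)) := h1 i hil
        _ ≤ C6 * 1 := by nlinarith
        _ ≤ (C6 + C1') * T := by nlinarith
  -- product bound
  have hcard : (Finset.univ.erase lst).card = d - 1 := by
    rw [Finset.card_erase_of_mem (Finset.mem_univ lst), Finset.card_univ, Fintype.card_fin]
  have hprod_erase : ∏ i ∈ Finset.univ.erase lst, |v i|
      ≤ (C6 * (T : ℝ) ^ (-(1 : ℝ) / ((d : ℝ) - 2))) ^ (d - 1) := by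
    rw [← hcard, ← Finset.prod_const]
    refine Finset.prod_le_prod (fun i _ => abs_nonneg _) (fun i hi => ?_)
    exact h1 i (Finset.ne_of_mem_erase hi)
  have hP : ∏ i, |v i| ≤ C6 ^ (d - 1) * C1' * (T : ℝ) ^ (-(1 : ℝ) / ((d : ℝ) - 2)) := by
    have hsplit : ∏ i, |v i| = |v lst| * ∏ i ∈ Finset.univ.erase lst, |v i| :=
      (Finset.mul_prod_erase Finset.univ (fun i => |v i|) (Finset.mem_univ lst)).symm
    have hpow_id : (T : ℝ) * (((T : ℝ) ^ (-(1 : ℝ) / ((d : ℝ) - 2))) ^ (d - 1 : ℕ))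
        = (T : ℝ) ^ (-(1 : ℝ) / ((d : ℝ) - 2)) := by
      rw [← Real.rpow_natCast ((T : ℝ) ^ (-(1 : ℝ) / ((d : ℝ) - 2))) (d - 1),
        ← Real.rpow_mul hT0.le]
      nth_rewrite 1 [← Real.rpow_one (T : ℝ)]
      rw [← Real.rpow_add hT0]
      congr 1
      have hc1 : ((d - 1 : ℕ) : ℝ) = (d : ℝ) - 1 := by
        have h : (1 : ℕ) ≤ d := by omega
        push_cast [Nat.cast_sub h]; ring
      rw [hc1]
      field_simp
      ring
    calc ∏ i, |v i| = |v lst| * ∏ i ∈ Finset.univ.erase lst, |v i| := hsplit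
      _ ≤ (C1' * T) * ((C6 * (T : ℝ) ^ (-(1 : ℝ) / ((d : ℝ) - 2))) ^ (d - 1)) := by
          apply mul_le_mul (h2 lst) hprod_erase
            (Finset.prod_nonneg fun i _ => abs_nonneg _) (by positivity)
      _ = C6 ^ (d - 1) * C1' *
            ((T : ℝ) * (((T : ℝ) ^ (-(1 : ℝ) / ((d : ℝ) - 2))) ^ (d - 1 : ℕ))) := by
          rw [mul_pow]; ring
      _ = C6 ^ (d - 1) * C1' * (T : ℝ) ^ (-(1 : ℝ) / ((d : ℝ) - 2)) := by rw [hpow_id]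
  -- convert T-power to norm-power
  have hTnorm : (T : ℝ) ^ (-(1 : ℝ) / ((d : ℝ) - 2))
      ≤ (C6 + C1') ^ ((1 : ℝ) / ((d : ℝ) - 2)) * ‖v‖ ^ (-(1 : ℝ) / ((d : ℝ) - 2)) := by
    have hdiv_pos : 0 < ‖v‖ / (C6 + C1') := by positivity
    have hdiv_le : ‖v‖ / (C6 + C1') ≤ (T : ℝ) := by
      rw [div_le_iff₀ hCsum]
      linarith [hnorm_le]
    have h := Real.rpow_le_rpow_of_nonpos hdiv_pos hdiv_le
      (by rw [neg_div]; exact neg_nonpos.mpr (by positivity) :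
        -(1 : ℝ) / ((d : ℝ) - 2) ≤ 0)
    calc (T : ℝ) ^ (-(1 : ℝ) / ((d : ℝ) - 2))
        ≤ (‖v‖ / (C6 + C1')) ^ (-(1 : ℝ) / ((d : ℝ) - 2)) := h
      _ = (C6 + C1') ^ ((1 : ℝ) / ((d : ℝ) - 2)) * ‖v‖ ^ (-(1 : ℝ) / ((d : ℝ) - 2)) := by
          rw [Real.div_rpow (norm_nonneg v) hCsum.le]
          rw [show ((1 : ℝ) / ((d : ℝ) - 2)) = -(-(1 : ℝ) / ((d : ℝ) - 2)) by ring]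
          rw [Real.rpow_neg hCsum.le]
          field_simp
  have hPfinal : ∏ i, |v i| ≤ (C6 ^ (d - 1) * C1' * (C6 + C1') ^ ((1 : ℝ) / ((d : ℝ) - 2)))
      * ‖v‖ ^ (-(1 : ℝ) / ((d : ℝ) - 2)) := by
    calc ∏ i, |v i| ≤ C6 ^ (d - 1) * C1' * (T : ℝ) ^ (-(1 : ℝ) / ((d : ℝ) - 2)) := hP
      _ ≤ C6 ^ (d - 1) * C1' *
            ((C6 + C1') ^ ((1 : ℝ) / ((d : ℝ) - 2)) * ‖v‖ ^ (-(1 : ℝ) / ((d : ℝ) - 2))) := by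
          apply mul_le_mul_of_nonneg_left hTnorm (by positivity)
      _ = _ := by ring
  -- take d-th roots
  rw [piProd]
  have hstep := Real.rpow_le_rpow (Finset.prod_nonneg fun i _ => abs_nonneg _)
    hPfinal (by positivity : (0 : ℝ) ≤ (1 : ℝ) / d)
  calc (∏ i, |v i|) ^ ((1 : ℝ) / d)
      ≤ ((C6 ^ (d - 1) * C1' * (C6 + C1') ^ ((1 : ℝ) / ((d : ℝ) - 2)))
          * ‖v‖ ^ (-(1 : ℝ) / ((d : ℝ) - 2))) ^ ((1 : ℝ) / d) := hstep
    _ = (C6 ^ (d - 1) * C1' * (C6 + C1') ^ ((1 : ℝ) / ((d : ℝ) - 2))) ^ ((1 : ℝ) / d)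
          * (‖v‖ ^ (-(1 : ℝ) / ((d : ℝ) - 2))) ^ ((1 : ℝ) / d) := by
        rw [Real.mul_rpow (by positivity) (by positivity)]
    _ = (C6 ^ (d - 1) * C1' * (C6 + C1') ^ ((1 : ℝ) / ((d : ℝ) - 2))) ^ ((1 : ℝ) / d)
          * ‖v‖ ^ (-(1 / ((d : ℝ) * ((d : ℝ) - 2)))) := by
        congr 1
        rw [← Real.rpow_mul (norm_nonneg v)]
        congr 1
        field_simp


lemma phiB_eq (z : Fin d → ℤ) : phiB B z = B.equivFun.symm (fun i => (z i : ℝ)) := by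
  simp [phiB, Module.Basis.equivFun_symm_apply]

lemma bounded_finite (Rl : ℝ) :
    {v : Fin d → ℝ | (∃ z : Fin d → ℤ, v = phiB B z) ∧ ‖v‖ ≤ Rl}.Finite := by
  classical
  set F := LinearMap.toContinuousLinearMap (B.equivFun : (Fin d → ℝ) →ₗ[ℝ] (Fin d → ℝ))
    with hF_def
  set M : ℤ := ⌈‖F‖ * |Rl|⌉ with hM_def
  have hsub : {v : Fin d → ℝ | (∃ z : Fin d → ℤ, v = phiB B z) ∧ ‖v‖ ≤ Rl}
      ⊆ (fun z : Fin d → ℤ => phiB B z) '' {z | ∀ i, z i ∈ Set.Icc (-M) M} := by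
    rintro v ⟨⟨z, rfl⟩, hnorm⟩
    refine ⟨z, fun i => ?_, rfl⟩
    have hFv : F (phiB B z) = fun i => (z i : ℝ) := by
      rw [phiB_eq, hF_def]
      simp only [LinearMap.coe_toContinuousLinearMap', LinearEquiv.coe_coe,
        LinearEquiv.apply_symm_apply]
    have hcoord : |(z i : ℝ)| ≤ ‖F‖ * |Rl| := by
      have h1 : |(z i : ℝ)| = ‖(F (phiB B z)) i‖ := by rw [hFv]; simp
      have h2 : ‖(F (phiB B z)) i‖ ≤ ‖F (phiB B z)‖ := norm_le_pi_norm _ i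
      have h3 : ‖F (phiB B z)‖ ≤ ‖F‖ * ‖phiB B z‖ := F.le_opNorm _
      have h4 : ‖phiB B z‖ ≤ |Rl| := le_trans hnorm (le_abs_self _)
      have h5 : ‖F‖ * ‖phiB B z‖ ≤ ‖F‖ * |Rl| :=
        mul_le_mul_of_nonneg_left h4 (norm_nonneg _)
      linarith
    have hM : |(z i : ℝ)| ≤ (M : ℝ) := le_trans hcoord (Int.le_ceil _)
    have habs : |z i| ≤ M := by exact_mod_cast (by rwa [← Int.cast_abs] at hM :
      ((|z i| : ℤ) : ℝ) ≤ (M : ℝ))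
    rw [Set.mem_Icc]
    constructor <;> [linarith [neg_abs_le (z i)]; linarith [le_abs_self (z i)]]
  apply Set.Finite.subset _ hsub
  apply Set.Finite.image
  have : {z : Fin d → ℤ | ∀ i, z i ∈ Set.Icc (-M) M}
      = Set.pi Set.univ (fun _ : Fin d => Set.Icc (-M) M) := by
    ext z; simp [Set.mem_pi, Pi.le_def, forall_and]
  rw [this]
  exact Set.Finite.pi fun _ => Set.finite_Icc _ _



lemma phiB_inj : Function.Injective (phiB B) := by
  intro z w h
  rw [phiB_eq, phiB_eq] at h
  have h2 := B.equivFun.symm.injective h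
  funext i
  have h3 := congrFun h2 i
  exact_mod_cast h3

lemma phiB_smul (n : ℤ) (z : Fin d → ℤ) : phiB B (n • z) = (n : ℝ) • phiB B z := by
  simp [phiB, Finset.smul_sum, mul_smul]

lemma phiB_single (i : Fin d) : phiB B (Pi.single i 1) = B i := by
  simp [phiB, Pi.single_apply]

lemma phiB_zero : phiB B (0 : Fin d → ℤ) = 0 := by
  simp [phiB]

end Aux

/-- Case II of the transference theorem: if d ≥ 3 and the dual lattice Λ*
contains a nonzero point whose last coordinate vanishes, then there is c > 0 such that
Π(v) ≤ c|v|^{-1/(d(d-2))} for infinitely many nonzero v ∈ Λ; hence ω(Λ) ≥ 1/(d(d-2)). -/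


theorem statement12 (d : ℕ) (hd : 3 ≤ d) (L : Set (Fin d → ℝ)) (hL : IsFullLattice L)
    (hu : ∃ u ∈ dualLattice L, u ≠ 0 ∧ u ⟨d - 1, by omega⟩ = 0) :
    (∃ c : ℝ, 0 < c ∧
      {v | v ∈ L ∧ v ≠ 0 ∧
        piProd d v ≤ c * ‖v‖ ^ (-(1 / ((d : ℝ) * ((d : ℝ) - 2))))}.Infinite) ∧
    ((1 / ((d : ℝ) * ((d : ℝ) - 2)) : ℝ) : EReal) ≤ omegaExp L := by
  classical
  obtain ⟨B, hB⟩ := hL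
  obtain ⟨u, hud, hu0, hul⟩ := hu
  set lst : Fin d := ⟨d - 1, by omega⟩ with hlst_def
  have hulst : u lst = 0 := hul
  have hmem : ∀ w : Fin d → ℝ, w ∈ L ↔ ∃ z : Fin d → ℤ, w = phiB B z := by
    intro w; rw [hB]; simp only [Set.mem_setOf_eq, phiB]
  obtain ⟨k, huk0⟩ := Function.ne_iff.mp hu0
  have huk : u k ≠ 0 := by simpa using huk0
  have hkl : k ≠ lst := by
    intro h; rw [h] at huk; exact huk hulst
  have hBiL : ∀ i, B i ∈ L := fun i => (hmem _).mpr ⟨Pi.single i 1, (phiB_single B i).symm⟩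
  choose m hm using fun i => hud (B i) (hBiL i)
  -- constants
  have hsumU : (0 : ℝ) ≤ (∑ j, |u j|) / |u k| :=
    div_nonneg (Finset.sum_nonneg fun j _ => abs_nonneg _) (abs_nonneg _)
  have hsumM : (0 : ℝ) ≤ ∑ i, (|m i| : ℝ) :=
    Finset.sum_nonneg fun i _ => by positivity
  have hsumB : (0 : ℝ) ≤ ∑ i, ‖B i‖ := Finset.sum_nonneg fun i _ => norm_nonneg _
  set C6 : ℝ := (1 + (∑ j, |u j|) / |u k|) * (9 * ((1 : ℝ) + ∑ i, (|m i| : ℝ))) *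
    (1 + ∑ i, ‖B i‖) with hC6_def
  have hC6 : 1 ≤ C6 := by
    rw [hC6_def]
    have e1 : (1 : ℝ) ≤ 1 + (∑ j, |u j|) / |u k| := by linarith
    have e2 : (1 : ℝ) ≤ 9 * (1 + ∑ i, (|m i| : ℝ)) := by linarith
    have e3 : (1 : ℝ) ≤ 1 + ∑ i, ‖B i‖ := by linarith
    have h12 : (1 : ℝ) ≤ (1 + (∑ j, |u j|) / |u k|) * (9 * (1 + ∑ i, (|m i| : ℝ))) := by
      nlinarith
    nlinarith
  set C1' : ℝ := 2 * (1 + ∑ i, ‖B i‖) with hC1'_def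
  have hC1' : 1 ≤ C1' := by rw [hC1'_def]; linarith
  have hd2R : (2 : ℝ) < (d : ℝ) := by exact_mod_cast (by omega : 2 < d)
  have hd2pos : (0 : ℝ) < (d : ℝ) - 2 := by linarith
  have hd0 : (0 : ℝ) < (d : ℝ) := by linarith
  set c : ℝ := (C6 ^ (d - 1) * C1' * (C6 + C1') ^ ((1 : ℝ) / ((d : ℝ) - 2)))
    ^ ((1 : ℝ) / d) with hc_def
  have hc1 : 1 ≤ c := by
    rw [hc_def]
    apply Real.one_le_rpow _ (by positivity)
    have b1 : (1 : ℝ) ≤ C6 ^ (d - 1) := one_le_pow₀ hC6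
    have b3 : (1 : ℝ) ≤ (C6 + C1') ^ ((1 : ℝ) / ((d : ℝ) - 2)) :=
      Real.one_le_rpow (by linarith) (by positivity)
    have b12 : (1 : ℝ) ≤ C6 ^ (d - 1) * C1' := by nlinarith
    nlinarith
  have hc0 : 0 < c := lt_of_lt_of_le one_pos hc1
  set T0 : ℕ := (45 * (1 + ∑ i, |m i|)).toNat with hT0_def
  have hMint : (0 : ℤ) ≤ 45 * (1 + ∑ i, |m i|) := by
    have h : (0 : ℤ) ≤ ∑ i, |m i| := Finset.sum_nonneg fun i _ => abs_nonneg _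
    omega
  have hT0cast : ∀ n : ℕ, 45 * (1 + ∑ i, |m i|) ≤ ((T0 + n + 1 : ℕ) : ℤ) := by
    intro n
    have h1 : ((T0 : ℕ) : ℤ) = 45 * (1 + ∑ i, |m i|) := by
      rw [hT0_def]; exact Int.toNat_of_nonneg hMint
    push_cast
    rw [← h1]
    push_cast
    have : (0 : ℤ) ≤ (n : ℤ) := Int.natCast_nonneg n
    linarith
  -- the basic construction
  have construct : ∀ n : ℕ, ∃ v : Fin d → ℝ, v ∈ L ∧ v ≠ 0 ∧
      (∀ i, i ≠ lst → |v i| ≤ C6 * ((T0 + n + 1 : ℕ) : ℝ) ^ (-(1 : ℝ) / ((d : ℝ) - 2))) ∧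
      piProd d v ≤ c * ‖v‖ ^ (-(1 / ((d : ℝ) * ((d : ℝ) - 2)))) := by
    intro n
    obtain ⟨z, hz0, hzb1, hzb2⟩ := key_pigeonhole B hd u k lst hkl huk hulst m hm
      (T0 + n + 1) (hT0cast n)
    have hvne : phiB B z ≠ 0 := by
      intro h
      exact hz0 (phiB_inj B (h.trans (phiB_zero B).symm))
    have hT1 : 1 ≤ ((T0 + n + 1 : ℕ) : ℝ) := by exact_mod_cast (by omega : 1 ≤ T0 + n + 1)
    have hb1 : ∀ i, i ≠ lst →
        |phiB B z i| ≤ C6 * ((T0 + n + 1 : ℕ) : ℝ) ^ (-(1 : ℝ) / ((d : ℝ) - 2)) := by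
      intro i hil
      rw [hC6_def]
      exact hzb1 i hil
    have hb2 : ∀ i, |phiB B z i| ≤ C1' * ((T0 + n + 1 : ℕ) : ℝ) := by
      intro i
      rw [hC1'_def]
      calc |phiB B z i| ≤ 2 * (1 + ∑ j, ‖B j‖) * ((T0 + n + 1 : ℕ) : ℝ) := hzb2 i
        _ = 2 * (1 + ∑ j, ‖B j‖) * ((T0 + n + 1 : ℕ) : ℝ) := rfl
    refine ⟨phiB B z, (hmem _).mpr ⟨z, rfl⟩, hvne, hb1, ?_⟩
    have h := conv_bound hd lst (phiB B z) hvne (T0 + n + 1) hT1 C6 C1' hC6 hC1' hb1 hb2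
    rw [hc_def]
    exact h
  -- the target set
  set S : Set (Fin d → ℝ) := {v | v ∈ L ∧ v ≠ 0 ∧
    piProd d v ≤ c * ‖v‖ ^ (-(1 / ((d : ℝ) * ((d : ℝ) - 2))))} with hS_def
  have hd1d : (1 : ℝ) / d ≠ 0 := by positivity
  obtain ⟨i0, hi0⟩ : ∃ i0 : Fin d, i0 ≠ lst := by
    refine ⟨⟨0, by omega⟩, ?_⟩
    intro h
    have h2 := congrArg Fin.val h
    simp only [hlst_def] at h2
    omega
  -- S is infinite
  have hSinf : S.Infinite := by
    by_cases hax : ∃ w, w ∈ L ∧ w ≠ 0 ∧ ∀ i, i ≠ lst → w i = 0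
    · obtain ⟨w, hwL, hw0, hwz⟩ := hax
      have hwlst : w lst ≠ 0 := by
        intro h
        apply hw0
        funext i
        by_cases hil : i = lst
        · rw [hil]; exact h
        · exact hwz i hil
      obtain ⟨zw, hzw⟩ := (hmem w).mp hwL
      apply Set.infinite_of_injective_forall_mem
        (f := fun n : ℕ => ((n : ℝ) + 1) • w)
      · intro a b hab
        have h := congrFun hab lst
        simp only [Pi.smul_apply, smul_eq_mul] at h
        have h2 : ((a : ℝ) + 1) = ((b : ℝ) + 1) := mul_right_cancel₀ hwlst h
        have h3 : (a : ℝ) = (b : ℝ) := by linarith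
        exact_mod_cast h3
      · intro n
        have hne : ((n : ℝ) + 1) ≠ 0 := by positivity
        have hnL : ((n : ℝ) + 1) • w ∈ L := by
          apply (hmem _).mpr
          refine ⟨((n : ℤ) + 1) • zw, ?_⟩
          rw [phiB_smul, ← hzw]
          congr 1
          push_cast
          ring
        have hn0 : ((n : ℝ) + 1) • w ≠ 0 := smul_ne_zero hne hw0
        refine ⟨hnL, hn0, ?_⟩
        have hzero : piProd d (((n : ℝ) + 1) • w) = 0 := by
          rw [piProd]
          have hpz : ∏ i, |(((n : ℝ) + 1) • w) i| = 0 := by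
            apply Finset.prod_eq_zero (Finset.mem_univ i0)
            simp [hwz i0 hi0]
          rw [hpz]
          exact Real.zero_rpow hd1d
        rw [hzero]
        have hnorm : 0 < ‖((n : ℝ) + 1) • w‖ := norm_pos_iff.mpr hn0
        positivity
    · choose v hv using construct
      by_contra hinf
      rw [Set.not_infinite] at hinf
      have hfin := hinf
      have hvS : ∀ n, v n ∈ S := fun n => ⟨(hv n).1, (hv n).2.1, (hv n).2.2.2⟩
      haveI := hfin.to_subtype
      obtain ⟨a, hafib⟩ := Finite.exists_infinite_fiber (fun n : ℕ => (⟨v n, hvS n⟩ : S))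
      have hfib : {n : ℕ | v n = a.1}.Infinite := by
        have heq : (fun n : ℕ => (⟨v n, hvS n⟩ : S)) ⁻¹' {a} = {n : ℕ | v n = a.1} := by
          ext n
          simp [Subtype.ext_iff]
        rw [← heq]
        exact Set.infinite_coe_iff.mp hafib
      have hzero : ∀ i, i ≠ lst → a.1 i = 0 := by
        intro i hil
        by_contra hne
        have hpos : 0 < |a.1 i| := abs_pos.mpr hne
        have htd : Filter.Tendsto
            (fun n : ℕ => C6 * ((T0 + n + 1 : ℕ) : ℝ) ^ (-(1 : ℝ) / ((d : ℝ) - 2)))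
            Filter.atTop (nhds 0) := by
          have h2 : Filter.Tendsto (fun n : ℕ => T0 + n + 1) Filter.atTop Filter.atTop :=
            Filter.tendsto_atTop_mono (fun n => by simp only [id_eq]; omega) Filter.tendsto_id
          have h1 : Filter.Tendsto (fun n : ℕ => ((T0 + n + 1 : ℕ) : ℝ))
              Filter.atTop Filter.atTop :=
            Filter.Tendsto.comp tendsto_natCast_atTop_atTop h2
          have h3 := (tendsto_rpow_neg_atTop
            (by positivity : (0 : ℝ) < 1 / ((d : ℝ) - 2))).comp h1
          have h4 := h3.const_mul C6
          simp only [Function.comp, mul_zero] at h4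
          convert h4 using 2
          rw [neg_div]
        have hev := htd.eventually_lt_const hpos
        obtain ⟨N, hN⟩ := Filter.eventually_atTop.mp hev
        obtain ⟨n, hn_mem, hn_gt⟩ := hfib.exists_gt N
        have hb := (hv n).2.2.1 i hil
        rw [hn_mem] at hb
        have := hN n (le_of_lt hn_gt)
        linarith
      exact hax ⟨a.1, a.2.1, a.2.2.1, hzero⟩
  refine ⟨⟨c, hc0, hSinf⟩, ?_⟩
  -- the omegaExp part
  set γ : ℝ := 1 / ((d : ℝ) * ((d : ℝ) - 2)) with hγ_def
  by_contra hcon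
  push_neg at hcon
  obtain ⟨γ', h1, h2⟩ := EReal.exists_between_coe_real hcon
  have hγ'γ : γ' < γ := by exact_mod_cast h2
  have hle : ((γ' : ℝ) : EReal) ≤ omegaExp L := by
    apply le_sSup
    refine ⟨γ', rfl, ?_⟩
    set R0 : ℝ := c ^ (1 / (γ - γ')) with hR0_def
    have hγγ' : 0 < γ - γ' := by linarith
    have hR01 : 1 ≤ R0 := Real.one_le_rpow hc1 (by positivity)
    have hBF := bounded_finite B R0
    have hdiff := hSinf.diff hBF
    apply Set.Infinite.mono _ hdiff
    rintro x ⟨⟨hxL, hx0, hxb⟩, hxnb⟩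
    have hxLz : ∃ z, x = phiB B z := (hmem x).mp hxL
    have hxR : R0 < ‖x‖ := by
      by_contra hle2
      push_neg at hle2
      exact hxnb ⟨hxLz, hle2⟩
    refine ⟨hxL, hx0, ?_⟩
    have hxpos : 0 < ‖x‖ := norm_pos_iff.mpr hx0
    have hcle : c ≤ ‖x‖ ^ (γ - γ') := by
      have he : c = (c ^ (1 / (γ - γ'))) ^ (γ - γ') := by
        rw [← Real.rpow_mul hc0.le]
        rw [one_div_mul_cancel (ne_of_gt hγγ')]
        rw [Real.rpow_one]
      rw [he]
      exact Real.rpow_le_rpow (by positivity) (le_of_lt hxR) hγγ'.le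
    calc piProd d x ≤ c * ‖x‖ ^ (-γ) := hxb
      _ ≤ ‖x‖ ^ (γ - γ') * ‖x‖ ^ (-γ) :=
          mul_le_mul_of_nonneg_right hcle (le_of_lt (Real.rpow_pos_of_pos hxpos _))
      _ = ‖x‖ ^ (-γ') := by
          rw [← Real.rpow_add hxpos]
          congr 1
          ring
  exact absurd h1 (not_lt.mpr hle)
end

section
/- Let d ≥ 3 and let Λ be a full-rank lattice in ℝ^d with det Λ = 1. Assuming the German–Evdokimov transference theorem (with c = d^{1/(2(d-2))}: if the pseudo-compound P* of a box P contains a nonzero point of Λ*, then cP contains a nonzero point of Λ), one has ω(Λ) ≥ ω(Λ*) / ((d-1)^2 + d(d-2) ω(Λ*)), where this is interpreted as ω(Λ) ≥ 1/(d(d-2)) when ω(Λ*) = ∞. -/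
open scoped BigOperators
open MeasureTheory

lemma finite_of_int_coords {d : ℕ} (g : Fin d → ((Fin d → ℝ) →ₗ[ℝ] ℝ))
    (hinj : ∀ x y : Fin d → ℝ, (∀ i, g i x = g i y) → x = y)
    (A : Set (Fin d → ℝ)) (hA : ∀ x ∈ A, ∀ i, ∃ n : ℤ, g i x = (n : ℝ))
    (R : ℝ) : {x ∈ A | ‖x‖ ≤ R}.Finite := by
  classical
  set f : (Fin d → ℝ) → (Fin d → ℤ) := fun x i => ⌊g i x⌋ with hf
  have hfx : ∀ x ∈ A, ∀ i, ((f x i : ℝ)) = g i x := by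
    intro x hx i
    obtain ⟨n, hn⟩ := hA x hx i
    simp [hf, hn]
  have hinj' : Set.InjOn f {x ∈ A | ‖x‖ ≤ R} := by
    intro x hx y hy hxy
    refine hinj x y fun i => ?_
    rw [← hfx x hx.1 i, ← hfx y hy.1 i, hxy]
  refine Set.Finite.of_finite_image ?_ hinj'
  set C : Fin d → ℝ := fun i => ‖(g i).toContinuousLinearMap‖ with hC
  refine Set.Finite.subset (Set.Finite.pi (fun i : Fin d =>
    Set.finite_Icc (-(⌈C i * R⌉)) ⌈C i * R⌉)) ?_
  rintro - ⟨x, ⟨hxA, hxR⟩, rfl⟩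
  intro i _
  simp only [Set.mem_Icc]
  rw [← abs_le]
  have h1 : |(f x i : ℝ)| ≤ C i * R := by
    rw [hfx x hxA i]
    calc |g i x| = ‖(g i).toContinuousLinearMap x‖ := by simp
    _ ≤ C i * ‖x‖ := (g i).toContinuousLinearMap.le_opNorm x
    _ ≤ C i * R := by
        have : (0:ℝ) ≤ C i := norm_nonneg _
        nlinarith [norm_nonneg x]
  have h2 : (|f x i| : ℝ) ≤ (⌈C i * R⌉ : ℝ) := by
    push_cast
    exact h1.trans (Int.le_ceil _)
  exact_mod_cast h2
lemma basis_mem_lattice {d : ℕ} (B : Module.Basis (Fin d) ℝ (Fin d → ℝ))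
    (L : Set (Fin d → ℝ)) (hL : L = {x | ∃ z : Fin d → ℤ, x = ∑ i, (z i : ℝ) • B i})
    (i : Fin d) : B i ∈ L := by
  classical
  rw [hL]
  refine ⟨fun j => if j = i then 1 else 0, ?_⟩
  simp [ite_smul]
lemma primal_ball_finite {d : ℕ} (B : Module.Basis (Fin d) ℝ (Fin d → ℝ))
    (L : Set (Fin d → ℝ)) (hL : L = {x | ∃ z : Fin d → ℤ, x = ∑ i, (z i : ℝ) • B i})
    (R : ℝ) : {x ∈ L | ‖x‖ ≤ R}.Finite := by
  classical
  apply finite_of_int_coords (fun i => B.coord i)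
  · intro x y h
    exact B.ext_elem_iff.2 (fun i => by simpa [Module.Basis.coord_apply] using h i)
  · intro x hx i
    rw [hL] at hx; obtain ⟨z, rfl⟩ := hx
    refine ⟨z i, ?_⟩
    simp [Module.Basis.coord_apply, map_sum, _root_.map_smul, Module.Basis.repr_self, Finsupp.single_apply]
lemma dual_ball_finite {d : ℕ} (B : Module.Basis (Fin d) ℝ (Fin d → ℝ))
    (L : Set (Fin d → ℝ)) (hL : L = {x | ∃ z : Fin d → ℤ, x = ∑ i, (z i : ℝ) • B i})
    (hdet : |(Matrix.of fun i j => B i j).det| = 1)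
    (R : ℝ) : {y ∈ dualLattice L | ‖y‖ ≤ R}.Finite := by
  classical
  apply finite_of_int_coords (fun i => ∑ j, B i j • (LinearMap.proj j : (Fin d → ℝ) →ₗ[ℝ] ℝ))
  · intro x y h
    have hdet' : IsUnit (Matrix.of fun i j => B i j).det := by
      refine isUnit_iff_ne_zero.2 (fun h0 => ?_)
      rw [h0] at hdet; simp at hdet
    have hinj := Matrix.mulVec_injective_iff_isUnit.2 ((Matrix.isUnit_iff_isUnit_det _).2 hdet')
    apply hinj
    funext i
    have := h i
    simpa [Matrix.mulVec, dotProduct, LinearMap.sum_apply, mul_comm] using this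
  · intro y hy i
    obtain ⟨n, hn⟩ := hy (B i) (basis_mem_lattice B L hL i)
    refine ⟨n, ?_⟩
    rw [← hn]
    simp [LinearMap.sum_apply, mul_comm]
lemma lattice_zsmul {d : ℕ} (B : Module.Basis (Fin d) ℝ (Fin d → ℝ))
    (L : Set (Fin d → ℝ)) (hL : L = {x | ∃ z : Fin d → ℤ, x = ∑ i, (z i : ℝ) • B i})
    {x : Fin d → ℝ} (hx : x ∈ L) (k : ℤ) : (k : ℝ) • x ∈ L := by
  rw [hL] at hx ⊢
  obtain ⟨z, rfl⟩ := hx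
  refine ⟨fun i => k * z i, ?_⟩
  rw [Finset.smul_sum]
  refine Finset.sum_congr rfl (fun i _ => ?_)
  rw [smul_smul]
  push_cast
  ring_nf
lemma D0 {d : ℕ} (hd : 3 ≤ d) (B : Module.Basis (Fin d) ℝ (Fin d → ℝ))
    (L : Set (Fin d → ℝ)) (hL : L = {x | ∃ z : Fin d → ℤ, x = ∑ i, (z i : ℝ) • B i})
    {x₀ : Fin d → ℝ} (hx₀ : x₀ ∈ L) (hne : x₀ ≠ 0) {i₀ : Fin d} (hz : x₀ i₀ = 0)
    (δ : ℝ) : {x | x ∈ L ∧ x ≠ 0 ∧ piProd d x ≤ ‖x‖ ^ (-δ)}.Infinite := by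
  have hinj : Function.Injective (fun n : ℕ => (((n : ℤ) + 1 : ℤ) : ℝ) • x₀) := by
    intro a b hab
    simp only at hab
    obtain ⟨j, hj⟩ : ∃ j, x₀ j ≠ 0 := by
      by_contra h
      push_neg at h
      exact hne (funext h)
    have h2 := congrFun hab j
    simp only [Pi.smul_apply, smul_eq_mul] at h2
    have h3 : (((a : ℤ) + 1 : ℤ) : ℝ) = (((b : ℤ) + 1 : ℤ) : ℝ) := mul_right_cancel₀ hj h2
    have h4 : (a : ℝ) = (b : ℝ) := by push_cast at h3; linarith
    exact_mod_cast h4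
  apply Set.infinite_of_injective_forall_mem hinj
  · intro n
    refine ⟨lattice_zsmul B L hL hx₀ _, ?_, ?_⟩
    · apply smul_ne_zero _ hne
      positivity
    · have hcoord : ((((n : ℤ) + 1 : ℤ) : ℝ) • x₀) i₀ = 0 := by
        simp [hz]
      have hprod : (∏ i, |((((n : ℤ) + 1 : ℤ) : ℝ) • x₀) i|) = 0 :=
        Finset.prod_eq_zero (Finset.mem_univ i₀) (by rw [hcoord, abs_zero])
      rw [piProd, hprod, Real.zero_rpow (by positivity)]
      positivity
lemma mink {d : ℕ} (hd : 3 ≤ d) (B : Module.Basis (Fin d) ℝ (Fin d → ℝ))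
    (L : Set (Fin d → ℝ)) (hL : L = {x | ∃ z : Fin d → ℤ, x = ∑ i, (z i : ℝ) • B i})
    (hdet : |(Matrix.of fun i j => B i j).det| = 1)
    (r : Fin d → ℝ) (hr : ∀ i, 0 < r i) (hprod : 1 < ∏ i, r i) :
    ∃ x ∈ L, x ≠ 0 ∧ ∀ i, |x i| < r i := by
  classical
  set Λ : AddSubgroup (Fin d → ℝ) := (Submodule.span ℤ (Set.range ⇑B)).toAddSubgroup with hΛ
  have hcar : ∀ v : Fin d → ℝ, v ∈ Λ ↔ v ∈ L := by
    intro v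
    rw [hL]
    constructor
    · intro hv
      obtain ⟨c, hc⟩ := (Submodule.mem_span_range_iff_exists_fun ℤ).1 hv
      exact ⟨c, by rw [← hc]; exact Finset.sum_congr rfl fun i _ => (Int.cast_smul_eq_zsmul ℝ _ _).symm⟩
    · rintro ⟨z, rfl⟩
      refine (Submodule.mem_span_range_iff_exists_fun ℤ).2 ⟨z, ?_⟩
      exact Finset.sum_congr rfl fun i _ => (Int.cast_smul_eq_zsmul ℝ _ _).symm
  set s : Set (Fin d → ℝ) := Set.pi Set.univ (fun i => Set.Ioo (-(r i)) (r i)) with hs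
  have h_symm : ∀ x ∈ s, -x ∈ s := by
    intro x hx i _
    have := hx i (Set.mem_univ i)
    simp only [Set.mem_Ioo] at this ⊢
    constructor <;> simp <;> linarith [this.1, this.2]
  have h_conv : Convex ℝ s := convex_pi (fun i _ => convex_Ioo _ _)
  have fund := ZSpan.isAddFundamentalDomain' B (volume : Measure (Fin d → ℝ))
  haveI : Countable Λ := (inferInstance : Countable (Submodule.span ℤ (Set.range ⇑B)))
  have hvolF : volume (ZSpan.fundamentalDomain B) = 1 := by
    rw [ZSpan.volume_fundamentalDomain]
    rw [show (Matrix.of ⇑B).det = (Matrix.of fun i j => B i j).det from rfl]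
    rw [show |(Matrix.of fun i j => B i j).det| = 1 from hdet]
    simp
  have hvols : volume s = ENNReal.ofReal (2 ^ d * ∏ i, r i) := by
    rw [hs, volume_pi_pi]
    simp_rw [Real.volume_Ioo]
    rw [← ENNReal.ofReal_prod_of_nonneg (fun i _ => by linarith [hr i])]
    congr 1
    rw [Finset.prod_congr rfl fun i _ => (by ring : r i - -r i = 2 * r i),
      Finset.prod_mul_distrib, Finset.prod_const]
    simp
  have hmeas : volume (ZSpan.fundamentalDomain B) * 2 ^ Module.finrank ℝ (Fin d → ℝ) < volume s := by
    rw [hvolF, hvols, one_mul]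
    have hfr : Module.finrank ℝ (Fin d → ℝ) = d := by
      simp [Module.finrank_pi]
    rw [hfr]
    calc (2 : ENNReal) ^ d = ENNReal.ofReal (2 ^ d) := by
          rw [ENNReal.ofReal_pow (by norm_num)]; norm_num
    _ < ENNReal.ofReal (2 ^ d * ∏ i, r i) := by
          rw [ENNReal.ofReal_lt_ofReal_iff (by positivity)]
          nlinarith [pow_pos (show (0:ℝ) < 2 by norm_num) d]
  obtain ⟨x, hx0, hxs⟩ :=
    exists_ne_zero_mem_lattice_of_measure_mul_two_pow_lt_measure fund h_symm h_conv hmeas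
  refine ⟨(x : Fin d → ℝ), (hcar _).1 x.2, ?_, ?_⟩
  · intro h
    apply hx0
    exact Subtype.ext (by simpa using h)
  · intro i
    have := hxs i (Set.mem_univ i)
    simp only [Set.mem_Ioo] at this
    rw [abs_lt]
    exact ⟨by linarith [this.1], this.2⟩
lemma neg_exponent_infinite {d : ℕ} (hd : 3 ≤ d) (B : Module.Basis (Fin d) ℝ (Fin d → ℝ))
    (L : Set (Fin d → ℝ)) (hL : L = {x | ∃ z : Fin d → ℤ, x = ∑ i, (z i : ℝ) • B i})
    (hdet : |(Matrix.of fun i j => B i j).det| = 1)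
    {δ : ℝ} (hδ : δ < 0) : {x | x ∈ L ∧ x ≠ 0 ∧ piProd d x ≤ ‖x‖ ^ (-δ)}.Infinite := by
  classical
  haveI : NeZero d := ⟨by omega⟩
  by_cases hzc : ∃ x₀ ∈ L, x₀ ≠ 0 ∧ ∃ i, x₀ i = 0
  · obtain ⟨x₀, hx₀, hne, i₀, hz⟩ := hzc
    exact D0 hd B L hL hx₀ hne hz δ
  push_neg at hzc
  -- the set of lattice points with small product is infinite
  set A : Set (Fin d → ℝ) := {x | x ∈ L ∧ x ≠ 0 ∧ (∏ i, |x i|) ≤ 2} with hA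
  have step1 : ∀ R : ℝ, 0 < R → ∃ x ∈ A, ∃ i, |x i| < R := by
    intro R hR
    obtain ⟨T, hT1, hTR⟩ : ∃ T : ℝ, 1 < T ∧ 2 / R < T ^ (d - 1) := by
      refine ⟨max 1 (2 / R) + 1, by simp [le_max_left], ?_⟩
      have h1 : 2 / R < max 1 (2 / R) + 1 := by
        have := le_max_right 1 (2 / R); linarith
      have h0 : (1:ℝ) ≤ max 1 (2 / R) + 1 := by
        have := le_max_left 1 (2 / R); linarith
      have h2 : max 1 (2 / R) + 1 ≤ (max 1 (2 / R) + 1) ^ (d - 1) :=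
        le_self_pow₀ h0 (by omega)
      linarith
    set r : Fin d → ℝ := fun i => if i = 0 then 2 / T ^ (d - 1) else T with hr
    have hrpos : ∀ i, 0 < r i := by
      intro i
      rw [hr]
      dsimp only
      split
      · positivity
      · linarith
    have hprod : ∏ i, r i = 2 := by
      rw [← Finset.mul_prod_erase Finset.univ r (Finset.mem_univ (0 : Fin d))]
      have h1 : r 0 = 2 / T ^ (d - 1) := by simp [hr]
      have h2 : ∏ i ∈ Finset.univ.erase (0 : Fin d), r i = T ^ (d - 1) := by
        rw [Finset.prod_congr rfl (fun i hi => ?_), Finset.prod_const,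
          Finset.card_erase_of_mem (Finset.mem_univ _), Finset.card_univ, Fintype.card_fin]
        rw [hr]
        dsimp only
        rw [if_neg (Finset.mem_erase.1 hi).1]
      rw [h1, h2]
      field_simp
    obtain ⟨x, hxL, hxne, hxr⟩ := mink hd B L hL hdet r hrpos (by rw [hprod]; norm_num)
    refine ⟨x, ⟨hxL, hxne, ?_⟩, 0, ?_⟩
    · calc (∏ i, |x i|) ≤ ∏ i, r i :=
            Finset.prod_le_prod (fun i _ => abs_nonneg _) (fun i _ => (hxr i).le)
      _ = 2 := hprod
    · have h1 : |x 0| < r 0 := hxr 0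
      have h2 : r 0 = 2 / T ^ (d - 1) := by simp [hr]
      have h3 : 2 / T ^ (d - 1) < R := by
        rw [div_lt_iff₀ (by positivity)]
        rw [div_lt_iff₀ hR] at hTR
        linarith
      rw [h2] at h1
      linarith
  have hAinf : A.Infinite := by
    by_contra hfin
    rw [Set.not_infinite] at hfin
    obtain ⟨x₁, hx₁⟩ := step1 1 one_pos
    have hne : hfin.toFinset.Nonempty := ⟨x₁, hfin.mem_toFinset.2 hx₁.1⟩
    haveI : Nonempty (Fin d) := ⟨0⟩
    set μ : ℝ := hfin.toFinset.inf' hne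
      (fun x => Finset.univ.inf' Finset.univ_nonempty (fun i => |x i|)) with hμ
    have hμpos : 0 < μ := by
      rw [hμ, Finset.lt_inf'_iff]
      intro x hx
      rw [Finset.lt_inf'_iff]
      intro i _
      have hxA : x ∈ A := hfin.mem_toFinset.1 hx
      have : x i ≠ 0 := fun h => hzc x hxA.1 hxA.2.1 i h
      exact abs_pos.2 this
    obtain ⟨x, hxA, i, hxi⟩ := step1 μ hμpos
    have : μ ≤ |x i| := by
      refine le_trans (Finset.inf'_le _ (hfin.mem_toFinset.2 hxA)) ?_
      exact Finset.inf'_le _ (Finset.mem_univ i)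
    linarith
  -- now remove a ball and land in the solution set
  set R₀ : ℝ := max 1 ((2 : ℝ) ^ (1 / (-δ))) with hR₀
  refine ((hAinf.diff (primal_ball_finite B L hL R₀)).mono ?_)
  rintro x ⟨⟨hxL, hxne, hxp⟩, hxball⟩
  have hxnorm : R₀ < ‖x‖ := by
    by_contra h
    push_neg at h
    exact hxball ⟨hxL, h⟩
  refine ⟨hxL, hxne, ?_⟩
  have h1 : piProd d x ≤ 2 := by
    rw [piProd]
    calc (∏ i, |x i|) ^ ((1:ℝ)/d) ≤ (2:ℝ) ^ ((1:ℝ)/d) := by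
          apply Real.rpow_le_rpow (Finset.prod_nonneg (fun i _ => abs_nonneg _)) hxp
          positivity
    _ ≤ (2:ℝ) ^ (1:ℝ) := by
          apply Real.rpow_le_rpow_of_exponent_le (by norm_num)
          rw [div_le_one (by positivity)]
          have : (3:ℝ) ≤ (d:ℝ) := by exact_mod_cast hd
          linarith
    _ = 2 := Real.rpow_one 2
  have h2 : (2:ℝ) ≤ ‖x‖ ^ (-δ) := by
    have hx1 : (2:ℝ) ^ (1 / (-δ)) ≤ ‖x‖ := le_trans (le_max_right _ _) hxnorm.le
    calc (2:ℝ) = ((2:ℝ) ^ (1 / (-δ))) ^ (-δ) := by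
          rw [← Real.rpow_mul (by norm_num), one_div, inv_mul_cancel₀ (by linarith), Real.rpow_one]
    _ ≤ ‖x‖ ^ (-δ) := by
          apply Real.rpow_le_rpow (by positivity) hx1 (by linarith)
  linarith
lemma sol_mono {d : ℕ} (M : Set (Fin d → ℝ))
    (ballfin : ∀ R : ℝ, {x ∈ M | ‖x‖ ≤ R}.Finite) {γ₁ γ₂ : ℝ} (h : γ₁ ≤ γ₂)
    (hinf : {x | x ∈ M ∧ x ≠ 0 ∧ piProd d x ≤ ‖x‖ ^ (-γ₂)}.Infinite) :
    {x | x ∈ M ∧ x ≠ 0 ∧ piProd d x ≤ ‖x‖ ^ (-γ₁)}.Infinite := by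
  refine (hinf.diff (ballfin 1)).mono ?_
  rintro x ⟨⟨hxM, hxne, hxp⟩, hxb⟩
  have hx1 : 1 < ‖x‖ := by
    by_contra hc
    push_neg at hc
    exact hxb ⟨hxM, hc⟩
  exact ⟨hxM, hxne, hxp.trans (Real.rpow_le_rpow_of_exponent_le hx1.le (by linarith))⟩

lemma pick_big {d : ℕ} {M T : Set (Fin d → ℝ)} (hTM : T ⊆ M)
    (ballfin : ∀ R : ℝ, {x ∈ M | ‖x‖ ≤ R}.Finite) (hT : T.Infinite) (R : ℝ) :
    ∃ y ∈ T, R < ‖y‖ := by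
  have : (T \ {x ∈ M | ‖x‖ ≤ R}).Infinite := hT.diff (ballfin R)
  obtain ⟨y, hy⟩ := this.nonempty
  refine ⟨y, hy.1, ?_⟩
  by_contra hc
  push_neg at hc
  exact hy.2 ⟨hTM hy.1, hc⟩

/-- From a lower bound on omegaExp, extract infinitude at any strictly smaller exponent. -/
lemma extract_sol {d : ℕ} (M : Set (Fin d → ℝ))
    (ballfin : ∀ R : ℝ, {x ∈ M | ‖x‖ ≤ R}.Finite) {γ γ' : ℝ} (h' : γ' < γ)
    (h : (γ : EReal) ≤ omegaExp M) :
    {x | x ∈ M ∧ x ≠ 0 ∧ piProd d x ≤ ‖x‖ ^ (-γ')}.Infinite := by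
  have hlt : (γ' : EReal) < omegaExp M := lt_of_lt_of_le (by exact_mod_cast h') h
  obtain ⟨e, he, hγe⟩ : ∃ e ∈ {e : EReal | ∃ γ₀ : ℝ, e = (γ₀ : EReal) ∧
      {x | x ∈ M ∧ x ≠ 0 ∧ piProd d x ≤ ‖x‖ ^ (-γ₀)}.Infinite}, (γ' : EReal) < e := by
    by_contra hc
    push_neg at hc
    exact absurd (sSup_le hc) (not_le.2 hlt)
  obtain ⟨γ₀, rfl, hinf⟩ := he
  exact sol_mono M ballfin (by exact_mod_cast hγe.le) hinf

/-- Conclude a lower bound on omegaExp from infinitude below a threshold. -/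
lemma omega_lb {d : ℕ} (M : Set (Fin d → ℝ)) (r : ℝ)
    (h : ∀ δ' : ℝ, δ' < r → {x | x ∈ M ∧ x ≠ 0 ∧ piProd d x ≤ ‖x‖ ^ (-δ')}.Infinite) :
    (r : EReal) ≤ omegaExp M := by
  by_contra hc
  push_neg at hc
  have hmem : ∀ δ' : ℝ, δ' < r → (δ' : EReal) ≤ omegaExp M := fun δ' hδ' =>
    le_sSup ⟨δ', rfl, h δ' hδ'⟩
  have hbot : ((r - 1 : ℝ) : EReal) ≤ omegaExp M := hmem _ (by linarith)
  have hne_top : omegaExp M ≠ ⊤ := fun ht => absurd (ht ▸ hc) (by simp)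
  have hne_bot : omegaExp M ≠ ⊥ := by
    intro hb
    rw [hb, le_bot_iff] at hbot
    exact EReal.coe_ne_bot _ hbot
  have hrepr : omegaExp M = ((omegaExp M).toReal : EReal) := (EReal.coe_toReal hne_top hne_bot).symm
  set t : ℝ := (omegaExp M).toReal with ht
  have htr : t < r := by
    have := hc
    rw [hrepr] at this
    exact_mod_cast this
  have h2 := hmem ((t + r) / 2) (by linarith)
  rw [hrepr] at h2
  have : (t + r) / 2 ≤ t := by exact_mod_cast h2
  linarith
set_option maxHeartbeats 2000000 in
lemma construct {d : ℕ} (hd : 3 ≤ d) (B : Module.Basis (Fin d) ℝ (Fin d → ℝ))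
    (L : Set (Fin d → ℝ)) (hL : L = {x | ∃ z : Fin d → ℤ, x = ∑ i, (z i : ℝ) • B i})
    (hdet : |(Matrix.of fun i j => B i j).det| = 1)
    (hGE : ∀ η : Fin d → ℝ, (∀ i, 0 < η i) →
      (∃ y ∈ dualLattice L, y ≠ 0 ∧ ∀ i, |y i| ≤ (∏ j, η j) / η i) →
      ∃ x ∈ L, x ≠ 0 ∧ ∀ i, |x i| ≤ (d : ℝ) ^ ((1 : ℝ) / (2 * ((d : ℝ) - 2))) * η i)
    {γ' : ℝ} (hγ' : 0 < γ')
    (hdual : {y | y ∈ dualLattice L ∧ y ≠ 0 ∧ piProd d y ≤ ‖y‖ ^ (-γ')}.Infinite)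
    {δ' : ℝ} (hδ0 : 0 ≤ δ')
    (hδ : δ' * (((d : ℝ) - 1) ^ 2 + (d : ℝ) * ((d : ℝ) - 2) * γ') < γ') :
    {x | x ∈ L ∧ x ≠ 0 ∧ piProd d x ≤ ‖x‖ ^ (-δ')}.Infinite := by
  classical
  haveI : NeZero d := ⟨by omega⟩
  haveI : Nonempty (Fin d) := ⟨0⟩
  have hD : (3 : ℝ) ≤ (d : ℝ) := by exact_mod_cast hd
  have hD1 : (0:ℝ) < (d : ℝ) - 1 := by linarith
  have hD0 : (0:ℝ) < (d : ℝ) := by linarith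
  set c : ℝ := (d : ℝ) ^ ((1 : ℝ) / (2 * ((d : ℝ) - 2))) with hcdef
  have hc0 : 0 < c := by
    rw [hcdef]; exact Real.rpow_pos_of_pos hD0 _
  have hc1 : 1 ≤ c := by
    rw [hcdef]
    apply Real.one_le_rpow (by linarith)
    have h2 : (0:ℝ) < 2 * ((d:ℝ) - 2) := by linarith
    positivity
  set Q : ℝ := ((d : ℝ) - 1) ^ 2 + (d : ℝ) * ((d : ℝ) - 2) * γ' with hQdef
  have hQpos : 0 < Q := by
    have e1 : (0:ℝ) ≤ (d : ℝ) * ((d : ℝ) - 2) * γ' :=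
      mul_nonneg (mul_nonneg (by linarith) (by linarith)) hγ'.le
    have e2 : (0:ℝ) < ((d : ℝ) - 1) ^ 2 := by nlinarith
    rw [hQdef]; linarith
  set β : ℝ := (d : ℝ) - 1 + (d : ℝ) * γ' with hβdef
  have hβpos : 0 < β := by
    have : (0:ℝ) < (d : ℝ) * γ' := mul_pos hD0 hγ'
    rw [hβdef]; linarith
  set E : ℝ := (γ' - Q * δ') / ((d : ℝ) - 1) with hEdef
  have hEpos : 0 < E := by
    rw [hEdef]
    apply div_pos _ hD1
    linarith [hδ]
  by_cases hzc : ∃ x₀ ∈ L, x₀ ≠ 0 ∧ ∃ i, x₀ i = 0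
  · obtain ⟨x₀, hx₀, hne0, i₀, hz⟩ := hzc
    exact D0 hd B L hL hx₀ hne0 hz δ'
  push_neg at hzc
  set S : Set (Fin d → ℝ) := {x | x ∈ L ∧ x ≠ 0 ∧ piProd d x ≤ ‖x‖ ^ (-δ')} with hSdef
  have key : ∀ R : ℝ, 0 < R → ∃ x ∈ S, ∃ i, |x i| < R := by
    intro R hR
    obtain ⟨y, hyT, hYbig⟩ := pick_big (fun y hy => hy.1)
      (dual_ball_finite B L hL hdet) hdual (max (max 2 (c / R)) (c ^ ((1 + δ') / E)))
    obtain ⟨hydual, hyne, hyp⟩ := hyT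
    set Y : ℝ := ‖y‖ with hYdef
    have hY2 : 2 < Y := lt_of_le_of_lt (le_trans (le_max_left _ _) (le_max_left _ _)) hYbig
    have hY1 : 1 < Y := by linarith
    have hY0 : 0 < Y := by linarith
    have hYR : c / Y < R := by
      rw [div_lt_iff₀ hY0]
      have h1 : c / R < Y := lt_of_le_of_lt (le_trans (le_max_right _ _) (le_max_left _ _)) hYbig
      rw [div_lt_iff₀ hR] at h1
      linarith
    have hYE : c ^ (1 + δ') ≤ Y ^ E := by
      have h1 : c ^ ((1 + δ') / E) ≤ Y := le_trans (le_max_right _ _) hYbig.le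
      calc c ^ (1 + δ') = (c ^ ((1 + δ') / E)) ^ E := by
            rw [← Real.rpow_mul hc0.le, div_mul_cancel₀ _ hEpos.ne']
      _ ≤ Y ^ E := Real.rpow_le_rpow (by positivity) h1 hEpos.le
    set ε : ℝ := Y ^ (-β) with hεdef
    have hε0 : 0 < ε := by rw [hεdef]; positivity
    have hε1 : ε ≤ 1 := by
      rw [hεdef]
      exact Real.rpow_le_one_of_one_le_of_nonpos hY1.le (by linarith)
    set m : Fin d → ℝ := fun i => max |y i| ε with hmdef
    have hm0 : ∀ i, 0 < m i := fun i => lt_of_lt_of_le hε0 (le_max_right _ _)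
    have hmy : ∀ i, |y i| ≤ m i := fun i => le_max_left _ _
    have hmε : ∀ i, ε ≤ m i := fun i => le_max_right _ _
    have hmY : ∀ i, m i ≤ Y := by
      intro i
      apply max_le
      · rw [hYdef, ← Real.norm_eq_abs]; exact norm_le_pi_norm y i
      · linarith
    set P : ℝ := ∏ i, m i with hPdef
    have hPpos : 0 < P := Finset.prod_pos (fun i _ => hm0 i)
    have hPle : P ≤ Y ^ (-((d:ℝ) * γ')) := by
      by_cases hall : ∀ i, ε ≤ |y i|
      · have hPeq : P = ∏ i, |y i| := Finset.prod_congr rfl (fun i _ => max_eq_left (hall i))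
        have hprn : (0:ℝ) ≤ ∏ i, |y i| := Finset.prod_nonneg (fun i _ => abs_nonneg _)
        have h2 : ((∏ i, |y i|) ^ ((1:ℝ)/d)) ^ ((d:ℝ)) ≤ (Y ^ (-γ')) ^ ((d:ℝ)) :=
          Real.rpow_le_rpow (by positivity) hyp hD0.le
        rw [← Real.rpow_mul hprn, ← Real.rpow_mul (by positivity), one_div,
          inv_mul_cancel₀ hD0.ne', Real.rpow_one] at h2
        rw [hPeq]
        calc (∏ i, |y i|) ≤ Y ^ (-γ' * (d:ℝ)) := h2
        _ = Y ^ (-((d:ℝ) * γ')) := by ring_nf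
      · push_neg at hall
        obtain ⟨i₀, hi₀⟩ := hall
        have hmi₀ : m i₀ = ε := max_eq_right hi₀.le
        have h2 : ∏ i ∈ Finset.univ.erase i₀, m i ≤ Y ^ (d - 1 : ℕ) := by
          rw [show (d - 1 : ℕ) = (Finset.univ.erase i₀).card by
            rw [Finset.card_erase_of_mem (Finset.mem_univ _), Finset.card_univ,
              Fintype.card_fin]]
          rw [← Finset.prod_const]
          exact Finset.prod_le_prod (fun i _ => (hm0 i).le) (fun i _ => hmY i)
        have h1 : P ≤ ε * Y ^ (d - 1 : ℕ) := by
          rw [hPdef, ← Finset.mul_prod_erase Finset.univ m (Finset.mem_univ i₀), hmi₀]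
          have := Finset.prod_pos (fun i (_ : i ∈ Finset.univ.erase i₀) => hm0 i)
          nlinarith [hε0]
        calc P ≤ ε * Y ^ (d - 1 : ℕ) := h1
        _ = Y ^ (-β) * Y ^ ((d:ℝ) - 1) := by
              rw [hεdef, ← Real.rpow_natCast Y (d - 1)]
              congr 2
              rw [Nat.cast_sub (by omega), Nat.cast_one]
        _ = Y ^ (-β + ((d:ℝ) - 1)) := (Real.rpow_add hY0 _ _).symm
        _ = Y ^ (-((d:ℝ) * γ')) := by rw [hβdef]; ring_nf
    set V : ℝ := P ^ ((1:ℝ)/((d:ℝ)-1)) with hVdef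
    have hVpos : 0 < V := by rw [hVdef]; positivity
    set η : Fin d → ℝ := fun i => V / m i with hηdef
    have hηpos : ∀ i, 0 < η i := fun i => div_pos hVpos (hm0 i)
    have hprodη : ∏ i, η i = V := by
      have h1 : V ^ (d:ℕ) = P ^ ((1/((d:ℝ)-1)) * (d:ℝ)) := by
        rw [← Real.rpow_natCast V d, hVdef, ← Real.rpow_mul hPpos.le]
      have h2 : (1/((d:ℝ)-1)) * (d:ℝ) - 1 = 1/((d:ℝ)-1) := by
        field_simp
        ring
      calc ∏ i, η i = V ^ (d:ℕ) / P := by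
            rw [hηdef]
            rw [Finset.prod_div_distrib, Finset.prod_const, Finset.card_univ, Fintype.card_fin,
              ← hPdef]
      _ = P ^ ((1/((d:ℝ)-1)) * (d:ℝ)) / P ^ (1:ℝ) := by rw [h1, Real.rpow_one]
      _ = P ^ ((1/((d:ℝ)-1)) * (d:ℝ) - 1) := (Real.rpow_sub hPpos _ _).symm
      _ = V := by rw [h2, hVdef]
    obtain ⟨x, hxL, hxne, hxb⟩ := hGE η hηpos ⟨y, hydual, hyne, by
      intro i
      rw [hprodη]
      have : V / η i = m i := by
        rw [hηdef]
        field_simp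
      rw [this]
      exact hmy i⟩
    -- product bound for x
    have hprodx : (∏ i, |x i|) ≤ c ^ (d:ℕ) * V := by
      calc (∏ i, |x i|) ≤ ∏ i, (c * η i) :=
            Finset.prod_le_prod (fun i _ => abs_nonneg _) (fun i _ => hxb i)
      _ = c ^ (d:ℕ) * V := by
            rw [Finset.prod_mul_distrib, Finset.prod_const, Finset.card_univ, Fintype.card_fin,
              hprodη]
    have hPix : piProd d x ≤ c * V ^ ((1:ℝ)/(d:ℝ)) := by
      rw [piProd]
      calc (∏ i, |x i|) ^ ((1:ℝ)/(d:ℝ)) ≤ (c ^ (d:ℕ) * V) ^ ((1:ℝ)/(d:ℝ)) := by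
            apply Real.rpow_le_rpow (Finset.prod_nonneg (fun i _ => abs_nonneg _)) hprodx
            positivity
      _ = c * V ^ ((1:ℝ)/(d:ℝ)) := by
            rw [Real.mul_rpow (by positivity) hVpos.le, ← Real.rpow_natCast c d,
              ← Real.rpow_mul hc0.le, mul_one_div, div_self hD0.ne', Real.rpow_one]
    have hVle : V ≤ Y ^ (-((d:ℝ) * γ')/((d:ℝ)-1)) := by
      rw [hVdef]
      calc P ^ ((1:ℝ)/((d:ℝ)-1)) ≤ (Y ^ (-((d:ℝ) * γ'))) ^ ((1:ℝ)/((d:ℝ)-1)) :=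
            Real.rpow_le_rpow hPpos.le hPle (by positivity)
      _ = Y ^ (-((d:ℝ) * γ')/((d:ℝ)-1)) := by
            rw [← Real.rpow_mul hY0.le, mul_one_div]
    have hxnorm : ‖x‖ ≤ c * Y ^ (β - ((d:ℝ) * γ')/((d:ℝ)-1)) := by
      apply (pi_norm_le_iff_of_nonneg (by positivity)).2
      intro i
      rw [Real.norm_eq_abs]
      calc |x i| ≤ c * η i := hxb i
      _ ≤ c * (V / ε) := by
            apply mul_le_mul_of_nonneg_left _ hc0.le
            rw [hηdef]
            apply div_le_div_of_nonneg_left hVpos.le hε0 (hmε i)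
      _ ≤ c * Y ^ (β - ((d:ℝ) * γ')/((d:ℝ)-1)) := by
            apply mul_le_mul_of_nonneg_left _ hc0.le
            rw [hεdef, Real.rpow_neg hY0.le, div_eq_mul_inv, inv_inv]
            calc V * Y ^ β ≤ Y ^ (-((d:ℝ) * γ')/((d:ℝ)-1)) * Y ^ β :=
                  mul_le_mul_of_nonneg_right hVle (by positivity)
            _ = Y ^ (-((d:ℝ) * γ')/((d:ℝ)-1) + β) := (Real.rpow_add hY0 _ _).symm
            _ = Y ^ (β - ((d:ℝ) * γ')/((d:ℝ)-1)) := by ring_nf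
    -- the final inequality
    have hfinal : piProd d x ≤ ‖x‖ ^ (-δ') := by
      have hxpos : 0 < ‖x‖ := by
        rw [norm_pos_iff]
        exact hxne
      have step1 : piProd d x ≤ c * Y ^ (-γ'/((d:ℝ)-1)) := by
        refine hPix.trans ?_
        apply mul_le_mul_of_nonneg_left _ hc0.le
        calc V ^ ((1:ℝ)/(d:ℝ)) ≤ (Y ^ (-((d:ℝ) * γ')/((d:ℝ)-1))) ^ ((1:ℝ)/(d:ℝ)) :=
              Real.rpow_le_rpow hVpos.le hVle (by positivity)
        _ = Y ^ (-γ'/((d:ℝ)-1)) := by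
              rw [← Real.rpow_mul hY0.le]
              congr 1
              field_simp
      have step2 : c * Y ^ (-γ'/((d:ℝ)-1)) ≤ (c * Y ^ (β - ((d:ℝ) * γ')/((d:ℝ)-1))) ^ (-δ') := by
        rw [Real.mul_rpow hc0.le (by positivity), ← Real.rpow_mul hY0.le]
        have hkey : c * Y ^ (-γ'/((d:ℝ)-1)) =
            c ^ (1 + δ') * (c ^ (-δ') * Y ^ (-γ'/((d:ℝ)-1))) := by
          rw [← mul_assoc, ← Real.rpow_add hc0]
          norm_num
        rw [hkey]
        calc c ^ (1 + δ') * (c ^ (-δ') * Y ^ (-γ'/((d:ℝ)-1)))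
            ≤ Y ^ E * (c ^ (-δ') * Y ^ (-γ'/((d:ℝ)-1))) := by
              apply mul_le_mul_of_nonneg_right hYE
              positivity
        _ = c ^ (-δ') * Y ^ (E + (-γ'/((d:ℝ)-1))) := by
              rw [Real.rpow_add hY0]
              ring
        _ = c ^ (-δ') * Y ^ ((β - ((d:ℝ) * γ')/((d:ℝ)-1)) * (-δ')) := by
              congr 2
              rw [hEdef, hβdef, hQdef]
              field_simp
              ring
      have step3 : (c * Y ^ (β - ((d:ℝ) * γ')/((d:ℝ)-1))) ^ (-δ') ≤ ‖x‖ ^ (-δ') :=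
        Real.rpow_le_rpow_of_nonpos hxpos hxnorm (by linarith)
      exact step1.trans (step2.trans step3)
    -- the small coordinate
    obtain ⟨i₀, hi₀⟩ : ∃ i, Y ≤ |y i| := by
      by_contra hcon
      push_neg at hcon
      have : ‖y‖ < Y := by
        apply (pi_norm_lt_iff hY0).2
        intro i
        rw [Real.norm_eq_abs]
        exact hcon i
      rw [← hYdef] at this
      exact lt_irrefl _ this
    refine ⟨x, ⟨hxL, hxne, hfinal⟩, i₀, ?_⟩
    calc |x i₀| ≤ c * η i₀ := hxb i₀
    _ ≤ c * (V / Y) := by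
          apply mul_le_mul_of_nonneg_left _ hc0.le
          rw [hηdef]
          apply div_le_div_of_nonneg_left hVpos.le hY0 (le_trans hi₀ (hmy i₀))
    _ ≤ c * (1 / Y) := by
          apply mul_le_mul_of_nonneg_left _ hc0.le
          have hV1 : V ≤ 1 := by
            refine hVle.trans (Real.rpow_le_one_of_one_le_of_nonpos hY1.le ?_)
            have h5 : (0:ℝ) < (d:ℝ) * γ' := mul_pos hD0 hγ'
            apply div_nonpos_of_nonpos_of_nonneg <;> linarith
          exact (div_le_div_iff_of_pos_right hY0).2 hV1
    _ = c / Y := by ring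
    _ < R := hYR
  -- conclude by the finite-minimum argument
  by_contra hfin
  rw [Set.not_infinite] at hfin
  obtain ⟨x₁, hx₁, _⟩ := key 1 one_pos
  have hne : hfin.toFinset.Nonempty := ⟨x₁, hfin.mem_toFinset.2 hx₁⟩
  set μ : ℝ := hfin.toFinset.inf' hne
    (fun x => Finset.univ.inf' Finset.univ_nonempty (fun i => |x i|)) with hμ
  have hμpos : 0 < μ := by
    rw [hμ, Finset.lt_inf'_iff]
    intro x hx
    rw [Finset.lt_inf'_iff]
    intro i _
    have hxS : x ∈ S := hfin.mem_toFinset.1 hx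
    exact abs_pos.2 (fun h => hzc x hxS.1 hxS.2.1 i h)
  obtain ⟨x, hxS, i, hxi⟩ := key μ hμpos
  have : μ ≤ |x i| := by
    refine le_trans (Finset.inf'_le _ (hfin.mem_toFinset.2 hxS)) ?_
    exact Finset.inf'_le _ (Finset.mem_univ i)
  linarith

/-- Theorem 2 of the paper: let d ≥ 3 and Λ a full-rank unimodular lattice.
Assuming the German–Evdokimov transference theorem with c = d^{1/(2(d-2))} (if the
pseudo-compound P* of a box P contains a nonzero point of Λ*, then cP contains a nonzero
point of Λ), one has ω(Λ) ≥ ω(Λ*)/((d-1)² + d(d-2)ω(Λ*)), interpreted as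
ω(Λ) ≥ 1/(d(d-2)) when ω(Λ*) = ∞. -/
theorem statement13 (d : ℕ) (hd : 3 ≤ d) (B : Module.Basis (Fin d) ℝ (Fin d → ℝ))
    (L : Set (Fin d → ℝ))
    (hL : L = {x | ∃ z : Fin d → ℤ, x = ∑ i, (z i : ℝ) • B i})
    (hdet : |(Matrix.of fun i j => B i j).det| = 1)
    (hGE : ∀ η : Fin d → ℝ, (∀ i, 0 < η i) →
      (∃ y ∈ dualLattice L, y ≠ 0 ∧ ∀ i, |y i| ≤ (∏ j, η j) / η i) →
      ∃ x ∈ L, x ≠ 0 ∧ ∀ i, |x i| ≤ (d : ℝ) ^ ((1 : ℝ) / (2 * ((d : ℝ) - 2))) * η i) :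
    (∀ γ : ℝ, 0 ≤ γ → ((γ : ℝ) : EReal) ≤ omegaExp (dualLattice L) →
      (((γ / (((d : ℝ) - 1) ^ 2 + (d : ℝ) * ((d : ℝ) - 2) * γ)) : ℝ) : EReal) ≤
        omegaExp L) ∧
    (omegaExp (dualLattice L) = ⊤ →
      (((1 / ((d : ℝ) * ((d : ℝ) - 2))) : ℝ) : EReal) ≤ omegaExp L) := by
  have ballfinD : ∀ R : ℝ, {y ∈ dualLattice L | ‖y‖ ≤ R}.Finite :=
    fun R => dual_ball_finite B L hL hdet R
  have hD : (3 : ℝ) ≤ (d : ℝ) := by exact_mod_cast hd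
  constructor
  · intro γ hγ0 hγω
    apply omega_lb
    intro δ' hδ'
    by_cases hneg : δ' < 0
    · exact neg_exponent_infinite hd B L hL hdet hneg
    push_neg at hneg
    have hQpos : 0 < ((d : ℝ) - 1) ^ 2 + (d : ℝ) * ((d : ℝ) - 2) * γ := by
      have e1 : (0:ℝ) ≤ (d : ℝ) * ((d : ℝ) - 2) * γ :=
        mul_nonneg (mul_nonneg (by linarith) (by linarith)) hγ0
      nlinarith
    have hδQ : δ' * (((d : ℝ) - 1) ^ 2 + (d : ℝ) * ((d : ℝ) - 2) * γ) < γ := by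
      rw [lt_div_iff₀ hQpos] at hδ'
      linarith
    have hγpos : 0 < γ := by
      rcases lt_or_eq_of_le hγ0 with h | h
      · exact h
      · exfalso
        rw [← h] at hδQ
        nlinarith
    -- choose γ' ∈ (0, γ) with δ' * Q(γ') < γ'
    set a : ℝ := 1 - δ' * ((d : ℝ) * ((d : ℝ) - 2)) with hadef
    set b : ℝ := δ' * ((d : ℝ) - 1) ^ 2 with hbdef
    have hb0 : 0 ≤ b := by
      rw [hbdef]; positivity
    have hab : b < a * γ := by rw [hadef, hbdef]; nlinarith
    have ha0 : 0 < a := by nlinarith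
    set γ' : ℝ := (b / a + γ) / 2 with hγ'def
    have hba : b / a < γ := by rw [div_lt_iff₀ ha0]; nlinarith
    have hγ'pos : 0 < γ' := by
      have : 0 ≤ b / a := div_nonneg hb0 ha0.le
      rw [hγ'def]; linarith
    have hγ'lt : γ' < γ := by rw [hγ'def]; linarith
    have hγ'Q : δ' * (((d : ℝ) - 1) ^ 2 + (d : ℝ) * ((d : ℝ) - 2) * γ') < γ' := by
      have h1 : b / a < γ' := by rw [hγ'def]; linarith
      rw [div_lt_iff₀ ha0] at h1
      rw [hadef, hbdef] at h1
      nlinarith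
    have hdual := extract_sol (dualLattice L) ballfinD hγ'lt hγω
    exact construct hd B L hL hdet hGE hγ'pos hdual hneg hγ'Q
  · intro htop
    apply omega_lb
    intro δ' hδ'
    by_cases hneg : δ' < 0
    · exact neg_exponent_infinite hd B L hL hdet hneg
    push_neg at hneg
    have hw : 0 < 1 - δ' * ((d : ℝ) * ((d : ℝ) - 2)) := by
      have hDD : (0:ℝ) < (d : ℝ) * ((d : ℝ) - 2) := by nlinarith
      rw [lt_div_iff₀ hDD] at hδ'
      nlinarith
    set γ : ℝ := δ' * ((d : ℝ) - 1) ^ 2 / (1 - δ' * ((d : ℝ) * ((d : ℝ) - 2))) + 1 with hγdef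
    have hγpos : 0 < γ := by
      have : 0 ≤ δ' * ((d : ℝ) - 1) ^ 2 / (1 - δ' * ((d : ℝ) * ((d : ℝ) - 2))) := by
        apply div_nonneg _ hw.le
        positivity
      rw [hγdef]; linarith
    have hγQ : δ' * (((d : ℝ) - 1) ^ 2 + (d : ℝ) * ((d : ℝ) - 2) * γ) < γ := by
      have h1 : δ' * ((d : ℝ) - 1) ^ 2 / (1 - δ' * ((d : ℝ) * ((d : ℝ) - 2))) < γ := by
        rw [hγdef]; linarith
      rw [div_lt_iff₀ hw] at h1
      nlinarith
    have hγω : ((γ + 1 : ℝ) : EReal) ≤ omegaExp (dualLattice L) := by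
      rw [htop]; exact le_top
    have hdual := extract_sol (dualLattice L) ballfinD (by linarith : γ < γ + 1) hγω
    exact construct hd B L hL hdet hGE hγpos hdual hneg hγQ
end
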